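/- arXiv:2205.04967 — 9 statements merged into one kernel-verified Lean document; each statement's English description precedes it below -/
import Mathlib

section
/- Let q ∈ [0,∞) and let I = (I_1,...,I_n) be a random element of E_n with independent coordinates such that P(I_j = k) = q^k / (∑_{ℓ=0}^{j-1} q^ℓ) for 0 ≤ k ≤ j-1. Then Φ(I) is Mallows distributed with parameters n and q, i.e. P(Φ(I) = σ) = q^{Inv(σ)} / ∏_{k=1}^n (∑_{ℓ=0}^{k-1} q^ℓ) for every σ ∈ S_n. -/
open MeasureTheory ProbabilityTheory

/-- Total number of inversions of a permutation of `Fin n`. -/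
def InvCount (n : ℕ) (σ : Equiv.Perm (Fin n)) : ℕ :=
  (Finset.univ.filter (fun p : Fin n × Fin n => p.1 < p.2 ∧ σ p.2 < σ p.1)).card

/-- Number of inversions created by position `j`. -/
def Invj (n : ℕ) (j : Fin n) (σ : Equiv.Perm (Fin n)) : ℕ :=
  (Finset.univ.filter (fun i : Fin n => i < j ∧ σ j < σ i)).card

/-- If `I = (I_1, …, I_n)` has independent coordinates with
`P(I_j = k) = q^k / ∑_{ℓ<j} q^ℓ` for `0 ≤ k ≤ j-1`, then `Φ(I)` is Mallows distributed:
since `Φ` is the bijection with `Inv_j (Φ I) = I_j`, the event `Φ(I) = σ` is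
`{∀ j, I_j = Inv_j σ}` and has probability `q^{Inv σ} / ∏_{k=1}^n ∑_{ℓ<k} q^ℓ`. -/
theorem mallows_from_independent_inversions
    (n : ℕ) (q : ℝ) (hq : 0 ≤ q)
    {Ω : Type*} [MeasurableSpace Ω] (P : Measure Ω) [IsProbabilityMeasure P]
    (I : Fin n → Ω → ℕ) (hmeas : ∀ j, Measurable (I j))
    (hindep : iIndepFun I P)
    (hrange : ∀ j ω, I j ω ≤ (j : ℕ))
    (hmarg : ∀ (j : Fin n) (k : ℕ), k ≤ (j : ℕ) →
      P {ω | I j ω = k} = ENNReal.ofReal (q ^ k / ∑ ℓ ∈ Finset.range ((j : ℕ) + 1), q ^ ℓ))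
    (σ : Equiv.Perm (Fin n)) :
    P {ω | ∀ j : Fin n, I j ω = Invj n j σ} =
      ENNReal.ofReal (q ^ InvCount n σ /
        ∏ k ∈ Finset.range n, ∑ ℓ ∈ Finset.range (k + 1), q ^ ℓ) := by
  classical
  -- positivity of partial sums
  have hS : ∀ j : ℕ, 0 < ∑ ℓ ∈ Finset.range (j + 1), q ^ ℓ := by
    intro j
    refine Finset.sum_pos' (fun ℓ _ => pow_nonneg hq ℓ) ⟨0, Finset.mem_range.2 (Nat.succ_pos j), by norm_num⟩
  -- Invj j σ ≤ j
  have hInvj_le : ∀ j : Fin n, Invj n j σ ≤ (j : ℕ) := by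
    intro j
    have h1 : (Finset.univ.filter (fun i : Fin n => i < j ∧ σ j < σ i))
        ⊆ Finset.Iio j := by
      intro i hi
      simp only [Finset.mem_filter] at hi
      exact Finset.mem_Iio.2 hi.2.1
    calc Invj n j σ ≤ (Finset.Iio j).card := Finset.card_le_card h1
      _ = (j : ℕ) := by simp
  -- sum of Invj equals InvCount
  have hsum : ∑ j : Fin n, Invj n j σ = InvCount n σ := by
    unfold Invj InvCount
    simp only [Finset.card_filter]
    rw [Fintype.sum_prod_type]
    rw [Finset.sum_comm]
  -- rewrite the event as an intersection
  have hset : {ω | ∀ j : Fin n, I j ω = Invj n j σ}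
      = ⋂ j : Fin n, (I j ⁻¹' {Invj n j σ}) := by
    ext ω; simp [Set.mem_iInter, Set.mem_preimage]
  rw [hset, hindep.meas_iInter (fun j => ⟨{Invj n j σ}, measurableSet_singleton _, rfl⟩)]
  have hpre : ∀ j : Fin n, I j ⁻¹' {Invj n j σ} = {ω | I j ω = Invj n j σ} := fun j => rfl
  have hmarg' : ∀ j : Fin n, P (I j ⁻¹' {Invj n j σ})
      = ENNReal.ofReal (q ^ Invj n j σ / ∑ ℓ ∈ Finset.range ((j : ℕ) + 1), q ^ ℓ) := by
    intro j
    rw [hpre j]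
    exact hmarg j _ (hInvj_le j)
  rw [Finset.prod_congr rfl (fun j _ => hmarg' j)]
  rw [← ENNReal.ofReal_prod_of_nonneg (s := Finset.univ)
    (f := fun j : Fin n => q ^ Invj n j σ / ∑ ℓ ∈ Finset.range ((j : ℕ) + 1), q ^ ℓ)
    (fun j _ => div_nonneg (pow_nonneg hq _) (hS (j : ℕ)).le)]
  congr 1
  rw [Finset.prod_div_distrib, Finset.prod_pow_eq_pow_sum, hsum]
  congr 1
  exact Fin.prod_univ_eq_prod_range (fun k => ∑ ℓ ∈ Finset.range (k + 1), q ^ ℓ) n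
end

section
/- For j ∈ ℕ, 0 ≤ k ≤ j-2, and t ∈ [0,∞), the quantity (k+1)·∑_{ℓ=0}^{j-2}(ℓ+1)t^ℓ − j·∑_{ℓ=j-k-2}^{j-2}(ℓ−j+k+2)t^ℓ is nonnegative; consequently the birth rate p_j(t,k) defined as this quantity divided by ∑_{ℓ=0}^{j-1} t^ℓ is nonnegative. -/
/-- The infinitesimal birth rate `p_j(t,k)` of the birth Mallows process:
`p_j(t,k) = [(k+1)∑_{ℓ=0}^{j-2}(ℓ+1)t^ℓ − j∑_{ℓ=j-k-2}^{j-2}(ℓ−j+k+2)t^ℓ] / ∑_{ℓ=0}^{j-1} t^ℓ`.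
The second sum is indexed over integers (its lowest index can be `-1`, where the
coefficient vanishes). -/
noncomputable def pj (j k : ℕ) (t : ℝ) : ℝ :=
  (((k : ℝ) + 1) * ∑ ℓ ∈ Finset.range (j - 1), ((ℓ : ℝ) + 1) * t ^ ℓ
    - (j : ℝ) * ∑ ℓ ∈ Finset.Icc ((j : ℤ) - k - 2) ((j : ℤ) - 2),
        ((ℓ : ℝ) - (j : ℝ) + (k : ℝ) + 2) * t ^ ℓ.toNat)
  / ∑ ℓ ∈ Finset.range j, t ^ ℓ

/-- The numerator of the birth rate `p_j(t,k)` is nonnegative for `0 ≤ k ≤ j-2` and `t ≥ 0`;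
consequently `p_j(t,k) ≥ 0`. -/
theorem birth_rate_nonneg (j k : ℕ) (hj : 1 ≤ j) (hk : k + 2 ≤ j) (t : ℝ) (ht : 0 ≤ t) :
    0 ≤ ((k : ℝ) + 1) * ∑ ℓ ∈ Finset.range (j - 1), ((ℓ : ℝ) + 1) * t ^ ℓ
        - (j : ℝ) * ∑ ℓ ∈ Finset.Icc ((j : ℤ) - k - 2) ((j : ℤ) - 2),
            ((ℓ : ℝ) - (j : ℝ) + (k : ℝ) + 2) * t ^ ℓ.toNat ∧
    0 ≤ pj j k t := by
  set n : ℕ := j - k - 2 with hn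
  have hjn : j = n + k + 2 := by omega
  -- reindex the Icc sum
  have hmap : Finset.Icc ((j : ℤ) - k - 2) ((j : ℤ) - 2)
      = Finset.map ⟨fun m : ℕ => (n : ℤ) + m, by have h : Function.Injective (fun m : ℕ => (n : ℤ) + m) := fun a b h => (by simpa using h); exact h⟩
          (Finset.range (k + 1)) := by
    ext x
    simp only [Finset.mem_Icc, Finset.mem_map, Finset.mem_range, Function.Embedding.coeFn_mk]
    constructor
    · intro hx
      refine ⟨(x - n).toNat, by omega, by omega⟩
    · rintro ⟨m, hm, rfl⟩
      omega
  have hIcc : ∑ ℓ ∈ Finset.Icc ((j : ℤ) - k - 2) ((j : ℤ) - 2),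
      ((ℓ : ℝ) - (j : ℝ) + (k : ℝ) + 2) * t ^ ℓ.toNat
      = ∑ m ∈ Finset.range (k + 1), (m : ℝ) * t ^ (n + m) := by
    rw [hmap, Finset.sum_map]
    refine Finset.sum_congr rfl fun m hm => ?_
    simp only [Function.Embedding.coeFn_mk]
    have h1 : ((n : ℤ) + m).toNat = n + m := by omega
    have h2 : (((n : ℤ) + m : ℤ) : ℝ) - (j : ℝ) + (k : ℝ) + 2 = (m : ℝ) := by
      have : (j : ℝ) = (n : ℝ) + (k : ℝ) + 2 := by rw [hjn]; push_cast; ring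
      push_cast
      rw [this]; ring
    rw [h1, h2]
  -- the sub-sum of the big sum
  have hsub : ∑ m ∈ Finset.range (k + 1), ((n : ℝ) + m + 1) * t ^ (n + m)
      ≤ ∑ ℓ ∈ Finset.range (j - 1), ((ℓ : ℝ) + 1) * t ^ ℓ := by
    have hrw : ∑ m ∈ Finset.range (k + 1), ((n : ℝ) + m + 1) * t ^ (n + m)
        = ∑ ℓ ∈ Finset.map ⟨fun m : ℕ => n + m, add_right_injective n⟩ (Finset.range (k + 1)),
            ((ℓ : ℝ) + 1) * t ^ ℓ := by
      rw [Finset.sum_map]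
      refine Finset.sum_congr rfl fun m hm => ?_
      simp only [Function.Embedding.coeFn_mk]
      push_cast
      ring
    rw [hrw]
    refine Finset.sum_le_sum_of_subset_of_nonneg ?_ fun i _ _ => by positivity
    intro x hx
    simp only [Finset.mem_map, Finset.mem_range, Function.Embedding.coeFn_mk] at hx ⊢
    obtain ⟨m, hm, rfl⟩ := hx
    omega
  -- termwise comparison
  have hterm : (j : ℝ) * ∑ m ∈ Finset.range (k + 1), (m : ℝ) * t ^ (n + m)
      ≤ ((k : ℝ) + 1) * ∑ m ∈ Finset.range (k + 1), ((n : ℝ) + m + 1) * t ^ (n + m) := by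
    rw [Finset.mul_sum, Finset.mul_sum]
    refine Finset.sum_le_sum fun m hm => ?_
    simp only [Finset.mem_range] at hm
    have hmk : (m : ℝ) ≤ (k : ℝ) := by exact_mod_cast Nat.lt_succ_iff.mp hm
    have hjr : (j : ℝ) = (n : ℝ) + (k : ℝ) + 2 := by rw [hjn]; push_cast; ring
    have htp : (0 : ℝ) ≤ t ^ (n + m) := by positivity
    rw [hjr]
    nlinarith [mul_nonneg (mul_nonneg (by linarith : (0:ℝ) ≤ (n:ℝ) + 1) (by linarith : (0:ℝ) ≤ (k:ℝ) - m)) htp]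
  have hnum : 0 ≤ ((k : ℝ) + 1) * ∑ ℓ ∈ Finset.range (j - 1), ((ℓ : ℝ) + 1) * t ^ ℓ
      - (j : ℝ) * ∑ ℓ ∈ Finset.Icc ((j : ℤ) - k - 2) ((j : ℤ) - 2),
          ((ℓ : ℝ) - (j : ℝ) + (k : ℝ) + 2) * t ^ ℓ.toNat := by
    rw [hIcc]
    have : ((k : ℝ) + 1) * ∑ m ∈ Finset.range (k + 1), ((n : ℝ) + m + 1) * t ^ (n + m)
        ≤ ((k : ℝ) + 1) * ∑ ℓ ∈ Finset.range (j - 1), ((ℓ : ℝ) + 1) * t ^ ℓ := by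
      have hk1 : (0:ℝ) ≤ (k : ℝ) + 1 := by positivity
      exact mul_le_mul_of_nonneg_left hsub hk1
    linarith
  refine ⟨hnum, ?_⟩
  unfold pj
  apply div_nonneg hnum
  exact Finset.sum_nonneg fun i _ => by positivity
end

section
/- For j ∈ ℕ, 0 ≤ k ≤ j-2, and t ≥ 0, the birth rates satisfy the identity p_j(t,k) − t·p_j(t,k+1) = (∑_{ℓ=0}^{j-1}(k−ℓ+1)t^ℓ) / (∑_{ℓ=0}^{j-1} t^ℓ). -/
open Finset

lemma sum_Icc_int_cast (a m : ℕ) (F : ℤ → ℝ) :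
    ∑ ℓ ∈ Finset.Icc (a : ℤ) ((a : ℤ) + m), F ℓ = ∑ i ∈ Finset.range (m + 1), F (a + i) := by
  induction m with
  | zero => simp
  | succ n ih =>
    have hins : Finset.Icc (a : ℤ) ((a : ℤ) + (n + 1)) =
        insert ((a : ℤ) + (n + 1)) (Finset.Icc (a : ℤ) ((a : ℤ) + n)) := by
      ext x; simp only [Finset.mem_Icc, Finset.mem_insert]; omega
    rw [show ((n+1 : ℕ) : ℤ) = (n : ℤ) + 1 by push_cast; ring, hins,
      Finset.sum_insert (by simp only [Finset.mem_Icc]; omega), ih,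
      eq_comm, Finset.sum_range_succ, add_comm]
    congr 2

lemma main_poly (t : ℝ) (c : ℝ) (n : ℕ) :
    (c + 1) * ∑ ℓ ∈ Finset.range n, ((ℓ : ℝ) + 1) * t ^ ℓ
      - (c + 2) * t * ∑ ℓ ∈ Finset.range n, ((ℓ : ℝ) + 1) * t ^ ℓ
      + ((n : ℝ) + 1) * (c + 1) * t ^ n
      = ∑ ℓ ∈ Finset.range (n + 1), (c - (ℓ : ℝ) + 1) * t ^ ℓ := by
  induction n with
  | zero => simp
  | succ n ih =>
    rw [Finset.sum_range_succ (f := fun ℓ => ((ℓ : ℝ) + 1) * t ^ ℓ),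
      Finset.sum_range_succ (f := fun ℓ => (c - (ℓ : ℝ) + 1) * t ^ ℓ), ← ih]
    push_cast
    ring



/-- `p_j(t,k) − t·p_j(t,k+1) = (∑_{ℓ=0}^{j-1}(k−ℓ+1)t^ℓ) / (∑_{ℓ=0}^{j-1} t^ℓ)`. -/
theorem birth_rate_difference_identity (j k : ℕ) (hk : k + 2 ≤ j) (t : ℝ) (ht : 0 ≤ t) :
    pj j k t - t * pj j (k + 1) t =
      (∑ ℓ ∈ Finset.range j, ((k : ℝ) - (ℓ : ℝ) + 1) * t ^ ℓ) /
        ∑ ℓ ∈ Finset.range j, t ^ ℓ := by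
  obtain ⟨a, rfl⟩ : ∃ a, j = a + k + 2 := ⟨j - (k + 2), by omega⟩
  unfold pj
  rw [show a + k + 2 - 1 = a + k + 1 by omega]
  -- first Icc sum
  have e1 : ∑ ℓ ∈ Finset.Icc (((a + k + 2 : ℕ) : ℤ) - k - 2) (((a + k + 2 : ℕ) : ℤ) - 2),
        ((ℓ : ℝ) - ((a + k + 2 : ℕ) : ℝ) + (k : ℝ) + 2) * t ^ ℓ.toNat
      = ∑ i ∈ Finset.range (k + 1), (i : ℝ) * t ^ (a + i) := by
    rw [show (((a + k + 2 : ℕ) : ℤ) - k - 2) = (a : ℤ) by push_cast; ring,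
      show (((a + k + 2 : ℕ) : ℤ) - 2) = (a : ℤ) + k by push_cast; ring,
      sum_Icc_int_cast]
    refine Finset.sum_congr rfl fun i _ => ?_
    rw [show ((a : ℤ) + i).toNat = a + i by omega]
    have h : (((a : ℤ) + (i : ℤ) : ℤ) : ℝ) = (a : ℝ) + i := by push_cast; ring
    rw [h]
    push_cast
    ring
  -- second Icc sum
  have e2 : ∑ ℓ ∈ Finset.Icc (((a + k + 2 : ℕ) : ℤ) - ((k + 1 : ℕ) : ℤ) - 2)
        (((a + k + 2 : ℕ) : ℤ) - 2),
        ((ℓ : ℝ) - ((a + k + 2 : ℕ) : ℝ) + ((k + 1 : ℕ) : ℝ) + 2) * t ^ ℓ.toNat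
      = ∑ i ∈ Finset.range (k + 1), ((i : ℝ) + 1) * t ^ (a + i) := by
    rw [show (((a + k + 2 : ℕ) : ℤ) - ((k + 1 : ℕ) : ℤ) - 2) = (a : ℤ) - 1 by push_cast; ring,
      show (((a + k + 2 : ℕ) : ℤ) - 2) = (a : ℤ) + k by push_cast; ring]
    have hins : Finset.Icc ((a : ℤ) - 1) ((a : ℤ) + k) =
        insert ((a : ℤ) - 1) (Finset.Icc (a : ℤ) ((a : ℤ) + k)) := by
      ext x; simp only [Finset.mem_Icc, Finset.mem_insert]; omega
    rw [hins, Finset.sum_insert (by simp only [Finset.mem_Icc]; omega), sum_Icc_int_cast]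
    have hz : ((((a : ℤ) - 1 : ℤ) : ℝ) - ((a + k + 2 : ℕ) : ℝ) + ((k + 1 : ℕ) : ℝ) + 2)
        * t ^ ((a : ℤ) - 1).toNat = 0 := by
      have : ((((a : ℤ) - 1 : ℤ) : ℝ) - ((a + k + 2 : ℕ) : ℝ) + ((k + 1 : ℕ) : ℝ) + 2) = 0 := by
        push_cast; ring
      rw [this, zero_mul]
    rw [hz, zero_add]
    refine Finset.sum_congr rfl fun i _ => ?_
    rw [show ((a : ℤ) + i).toNat = a + i by omega]
    have h : (((a : ℤ) + (i : ℤ) : ℤ) : ℝ) = (a : ℝ) + i := by push_cast; ring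
    rw [h]
    push_cast
    ring
  rw [e1, e2, ← mul_div_assoc, div_sub_div_same]
  congr 1
  -- telescoping
  have htel : (∑ i ∈ Finset.range (k + 1), (i : ℝ) * t ^ (a + i))
      - t * ∑ i ∈ Finset.range (k + 1), ((i : ℝ) + 1) * t ^ (a + i)
      = -(((k : ℝ) + 1) * t ^ (a + (k + 1))) := by
    have h := Finset.sum_range_sub' (f := fun i => (i : ℝ) * t ^ (a + i)) (n := k + 1)
    simp only [Nat.cast_zero, zero_mul] at h
    rw [Finset.mul_sum, ← Finset.sum_sub_distrib]
    calc ∑ i ∈ Finset.range (k + 1), ((i : ℝ) * t ^ (a + i) - t * (((i : ℝ) + 1) * t ^ (a + i)))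
        = ∑ i ∈ Finset.range (k + 1),
            ((i : ℝ) * t ^ (a + i) - ((i + 1 : ℕ) : ℝ) * t ^ (a + (i + 1))) := by
          refine Finset.sum_congr rfl fun i _ => ?_
          rw [show a + (i + 1) = (a + i) + 1 by omega, pow_succ]
          push_cast
          ring
      _ = 0 - ((k + 1 : ℕ) : ℝ) * t ^ (a + (k + 1)) := by rw [h]
      _ = -(((k : ℝ) + 1) * t ^ (a + (k + 1))) := by push_cast; ring
  have hmp := main_poly t (k : ℝ) (a + k + 1)
  rw [show a + k + 1 + 1 = a + k + 2 by omega] at hmp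
  push_cast at htel hmp ⊢
  linear_combination (-((a : ℝ) + k + 2)) * htel + hmp
end

section
/- Fix j ∈ ℕ and 0 ≤ k ≤ j-2, and let f(t) = t^{k+1}/∑_{ℓ=0}^{j-1} t^ℓ. Then f satisfies the ODE f'(t) = −p_j(t,k+1)·f(t) + p_j(t,k)·t^k/∑_{ℓ=0}^{j-1} t^ℓ for all t > 0. -/
/-- Convert the `ℤ`-indexed Icc sum in `pj` to a `ℕ`-indexed range sum. -/
lemma sumB_eq (j κ : ℕ) (t : ℝ) (h : κ + 1 ≤ j) :
    ∑ ℓ ∈ Finset.Icc ((j : ℤ) - κ - 2) ((j : ℤ) - 2),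
        ((ℓ : ℝ) - (j : ℝ) + (κ : ℝ) + 2) * t ^ ℓ.toNat
      = ∑ i ∈ Finset.range (κ + 1), ((κ : ℝ) - (i : ℝ)) * t ^ (j - 2 - i) := by
  refine Finset.sum_nbij' (fun ℓ => ((j : ℤ) - 2 - ℓ).toNat) (fun i => (j : ℤ) - 2 - (i : ℤ))
    ?_ ?_ ?_ ?_ ?_
  · intro a ha
    simp only [Finset.mem_Icc] at ha
    simp only [Finset.mem_range]
    omega
  · intro a ha
    simp only [Finset.mem_range] at ha
    simp only [Finset.mem_Icc]
    omega
  · intro a ha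
    simp only [Finset.mem_Icc] at ha
    omega
  · intro a ha
    simp only [Finset.mem_range] at ha
    omega
  · intro ℓ hℓ
    simp only [Finset.mem_Icc] at hℓ
    have h1 : (((j : ℤ) - 2 - ℓ).toNat : ℤ) = (j : ℤ) - 2 - ℓ := by omega
    have h2 : ℓ.toNat = j - 2 - ((j : ℤ) - 2 - ℓ).toNat := by omega
    have h3 : ((((j : ℤ) - 2 - ℓ).toNat : ℝ)) = (j : ℝ) - 2 - (ℓ : ℝ) := by
      have := congrArg (fun z : ℤ => (z : ℝ)) h1
      push_cast at this ⊢
      linarith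
    rw [← h2, h3]
    ring

/-- Geometric-type identity: `(1-t) ∑_{ℓ<n} (ℓ+1)t^ℓ = ∑_{ℓ<n+1} t^ℓ - (n+1)t^n`. -/
lemma geom_deriv (n : ℕ) (t : ℝ) :
    (1 - t) * ∑ ℓ ∈ Finset.range n, ((ℓ : ℝ) + 1) * t ^ ℓ
      = (∑ ℓ ∈ Finset.range (n + 1), t ^ ℓ) - ((n : ℝ) + 1) * t ^ n := by
  induction n with
  | zero => simp
  | succ n ih =>
    rw [Finset.sum_range_succ, Finset.sum_range_succ (f := fun ℓ => t ^ ℓ)]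
    push_cast
    linear_combination ih

set_option maxHeartbeats 1000000 in
/-- The target function `f(t) = t^{k+1}/∑_{ℓ<j} t^ℓ` satisfies the forward ODE
`f'(t) = −p_j(t,k+1) f(t) + p_j(t,k) t^k/∑_{ℓ<j} t^ℓ`. -/
theorem target_function_satisfies_ode (j k : ℕ) (hk : k + 2 ≤ j) (t : ℝ) (ht : 0 < t) :
    HasDerivAt (fun s : ℝ => s ^ (k + 1) / ∑ ℓ ∈ Finset.range j, s ^ ℓ)
      (-pj j (k + 1) t * (t ^ (k + 1) / ∑ ℓ ∈ Finset.range j, t ^ ℓ)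
        + pj j k t * t ^ k / ∑ ℓ ∈ Finset.range j, t ^ ℓ) t := by
  have hS : (0 : ℝ) < ∑ ℓ ∈ Finset.range j, t ^ ℓ := by
    apply Finset.sum_pos (fun i _ => pow_pos ht i)
    exact ⟨0, Finset.mem_range.mpr (by omega)⟩
  have hS0 : (∑ ℓ ∈ Finset.range j, t ^ ℓ) ≠ 0 := ne_of_gt hS
  have hnum : HasDerivAt (fun s : ℝ => s ^ (k + 1)) (((k : ℝ) + 1) * t ^ k) t := by
    simpa using hasDerivAt_pow (k + 1) t
  have hden : HasDerivAt (fun s : ℝ => ∑ ℓ ∈ Finset.range j, s ^ ℓ)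
      (∑ ℓ ∈ Finset.range (j - 1), ((ℓ : ℝ) + 1) * t ^ ℓ) t := by
    have h1 : HasDerivAt (fun s : ℝ => ∑ ℓ ∈ Finset.range j, s ^ ℓ)
        (∑ ℓ ∈ Finset.range j, (ℓ : ℝ) * t ^ (ℓ - 1)) t :=
      HasDerivAt.fun_sum fun ℓ _ => hasDerivAt_pow ℓ t
    convert h1 using 1
    rw [show j = (j - 1) + 1 from by omega, Finset.sum_range_succ']
    simp [Nat.add_sub_cancel]
  have hdiv := hnum.fun_div hden hS0
  refine hdiv.congr_deriv (Eq.symm ?_)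
  -- names
  set S := ∑ ℓ ∈ Finset.range j, t ^ ℓ with hSdef
  set T := ∑ ℓ ∈ Finset.range (j - 1), ((ℓ : ℝ) + 1) * t ^ ℓ with hTdef
  rw [pj, pj, sumB_eq j k t (by omega), sumB_eq j (k + 1) t (by omega)]
  -- trim the vanishing top term of the (k+1)-sum
  have htrim : ∑ i ∈ Finset.range ((k + 1) + 1), (((k + 1 : ℕ) : ℝ) - (i : ℝ)) * t ^ (j - 2 - i)
      = ∑ i ∈ Finset.range (k + 1), (((k : ℝ) + 1) - (i : ℝ)) * t ^ (j - 2 - i) := by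
    rw [Finset.sum_range_succ]
    push_cast
    simp
  rw [htrim]
  set Bk := ∑ i ∈ Finset.range (k + 1), ((k : ℝ) - (i : ℝ)) * t ^ (j - 2 - i) with hBk
  set Bk1 := ∑ i ∈ Finset.range (k + 1), (((k : ℝ) + 1) - (i : ℝ)) * t ^ (j - 2 - i) with hBk1
  -- key recurrence: t * Bk1 = (k+1) t^(j-1) + Bk
  have hR2 : t * Bk1 = ((k : ℝ) + 1) * t ^ (j - 1) + Bk := by
    have hmul : t * Bk1 = ∑ i ∈ Finset.range (k + 1), (((k : ℝ) + 1) - (i : ℝ)) * t ^ (j - 1 - i) := by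
      rw [hBk1, Finset.mul_sum]
      refine Finset.sum_congr rfl fun i hi => ?_
      simp only [Finset.mem_range] at hi
      rw [show j - 1 - i = (j - 2 - i) + 1 from by omega, pow_succ]
      ring
    rw [hmul, Finset.sum_range_succ' (f := fun i => (((k : ℝ) + 1) - (i : ℝ)) * t ^ (j - 1 - i)),
      hBk, Finset.sum_range_succ]
    push_cast
    have hterm : ∀ i ∈ Finset.range k,
        (((k : ℝ) + 1) - (((i : ℝ)) + 1)) * t ^ (j - 1 - (i + 1))
          = ((k : ℝ) - (i : ℝ)) * t ^ (j - 2 - i) := by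
      intro i hi
      simp only [Finset.mem_range] at hi
      rw [show j - 1 - (i + 1) = j - 2 - i from by omega]
      ring
    rw [Finset.sum_congr rfl hterm]
    simp
    ring
  -- geometric identity
  have hR1 : (1 - t) * T = S - (j : ℝ) * t ^ (j - 1) := by
    have := geom_deriv (j - 1) t
    rw [show (j - 1) + 1 = j from by omega] at this
    rw [hTdef, hSdef, this]
    have : ((j - 1 : ℕ) : ℝ) = (j : ℝ) - 1 := by
      have : (1 : ℕ) ≤ j := by omega
      push_cast [this]
      ring
    rw [this]
    ring
  -- now a field computation
  push_cast
  field_simp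
  rw [show (∑ ℓ ∈ Finset.range (j - 1), ((ℓ : ℝ) + 1) * t ^ ℓ) = T from hTdef.symm,
    show (∑ ℓ ∈ Finset.range j, t ^ ℓ) = S from hSdef.symm]
  rw [mul_div_cancel_left₀ _ hS0]
  linear_combination ((j : ℝ) * t ^ k) * hR2 + (((k : ℝ) + 1) * t ^ k) * hR1
end

section
/- Fix j ∈ ℕ and u ∈ (0,1). The function t ↦ log(1 − u(1 − t^j)) / log t, defined for t ∈ (0,∞) \ {1}, is increasing on (0,1) and on (1,∞), and extends continuously to t = 1 with value depending continuously on the data; in particular, for any 0 < s < t with s,t ≠ 1, one has log(1−u(1−s^j))/log s ≤ log(1−u(1−t^j))/log t. -/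
open Filter Real Set

private lemma uqm_hpos {u : ℝ} (hu : u ∈ Set.Ioo (0:ℝ) 1) {j : ℕ} {t : ℝ} (ht : 0 < t) :
    0 < 1 - u * (1 - t ^ j) := by
  have h1 : (0:ℝ) < t ^ j := pow_pos ht j
  nlinarith [hu.1, hu.2]

private lemma uqm_key1 {u : ℝ} (hu : u ∈ Set.Ioo (0:ℝ) 1) {x : ℝ} (hx : 0 ≤ x) :
    ((1-u)+u*x) * log ((1-u)+u*x) ≤ u * (x * log x) := by
  have h := Real.convexOn_mul_log.2 (mem_Ici.2 (zero_le_one)) (mem_Ici.2 hx)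
    (by linarith [hu.2] : (0:ℝ) ≤ 1-u) hu.1.le (by ring)
  simpa [smul_eq_mul, Real.log_one] using h

private lemma uqm_key2 {u : ℝ} (hu : u ∈ Set.Ioo (0:ℝ) 1) {x : ℝ} (hx : 0 < x) :
    u * log x ≤ log ((1-u)+u*x) := by
  have h := strictConcaveOn_log_Ioi.concaveOn.2 (mem_Ioi.2 one_pos) (mem_Ioi.2 hx)
    (by linarith [hu.2] : (0:ℝ) ≤ 1-u) hu.1.le (by ring)
  simpa [smul_eq_mul, Real.log_one] using h

private lemma uqm_hderN {u : ℝ} (hu : u ∈ Set.Ioo (0:ℝ) 1) (j : ℕ) {t : ℝ} (ht : 0 < t) :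
    HasDerivAt (fun t : ℝ => Real.log (1 - u * (1 - t ^ j)))
      ((1 - u * (1 - t ^ j))⁻¹ * (u * (j * t ^ (j-1)))) t := by
  have hg : HasDerivAt (fun t : ℝ => 1 - u * (1 - t ^ j)) (u * (j * t ^ (j-1))) t := by
    have h2 := ((hasDerivAt_pow j t).const_mul u).const_add (1-u)
    exact h2.congr_of_eventuallyEq (Filter.Eventually.of_forall fun y => by ring)
  exact (Real.hasDerivAt_log (ne_of_gt (uqm_hpos hu ht))).comp t hg

private lemma uqm_hderF {u : ℝ} (hu : u ∈ Set.Ioo (0:ℝ) 1) (j : ℕ) {t : ℝ} (ht : 0 < t)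
    (ht1 : t ≠ 1) :
    HasDerivAt (fun t : ℝ => Real.log (1 - u * (1 - t ^ j)) / Real.log t)
      (((1 - u * (1 - t ^ j))⁻¹ * (u * (j * t ^ (j-1))) * Real.log t
        - Real.log (1 - u * (1 - t ^ j)) * t⁻¹) / (Real.log t) ^ 2) t :=
  (uqm_hderN hu j ht).div (Real.hasDerivAt_log (ne_of_gt ht))
    (Real.log_ne_zero_of_pos_of_ne_one ht ht1)

private lemma uqm_deriv_nonneg {u : ℝ} (hu : u ∈ Set.Ioo (0:ℝ) 1) {j : ℕ} (hj : 1 ≤ j)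
    {t : ℝ} (ht : 0 < t) :
    0 ≤ ((1 - u * (1 - t ^ j))⁻¹ * (u * (j * t ^ (j-1))) * Real.log t
        - Real.log (1 - u * (1 - t ^ j)) * t⁻¹) / (Real.log t) ^ 2 := by
  obtain ⟨k, rfl⟩ : ∃ k, j = k + 1 := ⟨j - 1, by omega⟩
  simp only [Nat.add_sub_cancel]
  have hh : 0 < 1 - u * (1 - t ^ (k+1)) := uqm_hpos hu ht
  have hform : 1 - u * (1 - t ^ (k+1)) = (1-u) + u * t^(k+1) := by ring
  have hxpos : 0 < t ^ (k+1) := pow_pos ht _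
  have key : ((1-u)+u*t^(k+1)) * log ((1-u)+u*t^(k+1)) ≤ u * (t^(k+1) * log (t^(k+1))) :=
    uqm_key1 hu hxpos.le
  have hlog : log (t^(k+1)) = ((k:ℝ)+1) * log t := by
    rw [Real.log_pow]; push_cast; ring
  rw [hlog] at key
  apply div_nonneg _ (sq_nonneg _)
  rw [sub_nonneg, hform]
  have ht0 : t ≠ 0 := ne_of_gt ht
  have hh0 : (1-u) + u*t^(k+1) ≠ 0 := by rw [← hform]; exact hh.ne'
  have hpos' : (0:ℝ) < t * ((1-u)+u*t^(k+1)) := by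
    rw [← hform]; positivity
  rw [← mul_le_mul_iff_right₀ hpos']
  have e1 : t * ((1-u)+u*t^(k+1)) * (log ((1-u)+u*t^(k+1)) * t⁻¹)
      = ((1-u)+u*t^(k+1)) * log ((1-u)+u*t^(k+1)) := by
    field_simp
  have e2 : t * ((1-u)+u*t^(k+1)) * (((1-u)+u*t^(k+1))⁻¹ * (u * ((↑(k+1)) * t ^ k)) * log t)
      = u * (t^(k+1) * (((k:ℝ)+1) * log t)) := by
    field_simp
    push_cast
    ring
  rw [e1, e2]
  exact key

/-- For fixed `j ≥ 1` and `u ∈ (0,1)`, the function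
`t ↦ log(1 − u(1 − t^j)) / log t` is monotone: it is increasing on `(0,1)` and on
`(1,∞)`, it extends continuously at `t = 1` (with value `j·u`), and for any
`0 < s < t` with `s, t ≠ 1` one has the inequality between the two values. -/
theorem uniform_quantile_monotone (j : ℕ) (hj : 1 ≤ j) (u : ℝ) (hu : u ∈ Set.Ioo (0 : ℝ) 1) :
    (MonotoneOn (fun t : ℝ => Real.log (1 - u * (1 - t ^ j)) / Real.log t)
        (Set.Ioo (0 : ℝ) 1)) ∧
    (MonotoneOn (fun t : ℝ => Real.log (1 - u * (1 - t ^ j)) / Real.log t)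
        (Set.Ioi (1 : ℝ))) ∧
    (Tendsto (fun t : ℝ => Real.log (1 - u * (1 - t ^ j)) / Real.log t)
        (nhdsWithin 1 {(1 : ℝ)}ᶜ) (nhds ((j : ℝ) * u))) ∧
    ∀ s t : ℝ, 0 < s → s < t → s ≠ 1 → t ≠ 1 →
      Real.log (1 - u * (1 - s ^ j)) / Real.log s ≤
        Real.log (1 - u * (1 - t ^ j)) / Real.log t := by
  set f : ℝ → ℝ := fun t => Real.log (1 - u * (1 - t ^ j)) / Real.log t with hf
  -- monotone on Ioo 0 1
  have mono1 : MonotoneOn f (Set.Ioo (0:ℝ) 1) := by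
    apply monotoneOn_of_deriv_nonneg (convex_Ioo 0 1)
    · intro t ht
      exact (uqm_hderF hu j ht.1 ht.2.ne).continuousAt.continuousWithinAt
    · rw [interior_Ioo]
      intro t ht
      exact (uqm_hderF hu j ht.1 ht.2.ne).differentiableAt.differentiableWithinAt
    · rw [interior_Ioo]
      intro t ht
      rw [(uqm_hderF hu j ht.1 ht.2.ne).deriv]
      exact uqm_deriv_nonneg hu hj ht.1
  have mono2 : MonotoneOn f (Set.Ioi (1:ℝ)) := by
    apply monotoneOn_of_deriv_nonneg (convex_Ioi 1)
    · intro t ht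
      exact (uqm_hderF hu j (lt_trans one_pos ht) (ne_of_gt ht)).continuousAt.continuousWithinAt
    · rw [interior_Ioi]
      intro t ht
      exact (uqm_hderF hu j (lt_trans one_pos ht)
        (ne_of_gt ht)).differentiableAt.differentiableWithinAt
    · rw [interior_Ioi]
      intro t ht
      rw [(uqm_hderF hu j (lt_trans one_pos ht) (ne_of_gt ht)).deriv]
      exact uqm_deriv_nonneg hu hj (lt_trans one_pos ht)
  -- limit at 1
  have hlim : Tendsto f (nhdsWithin 1 {(1:ℝ)}ᶜ) (nhds ((j:ℝ) * u)) := by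
    have hdN : HasDerivAt (fun t : ℝ => Real.log (1 - u * (1 - t ^ j))) ((j:ℝ) * u) 1 := by
      have h := uqm_hderN hu j one_pos
      norm_num at h
      convert h using 1
      ring
    have hdL : HasDerivAt Real.log 1 1 := by
      simpa using Real.hasDerivAt_log one_ne_zero
    have t1 := hasDerivAt_iff_tendsto_slope.mp hdN
    have t2 := hasDerivAt_iff_tendsto_slope.mp hdL
    have t3 := t1.div t2 one_ne_zero
    rw [div_one] at t3
    refine t3.congr' ?_
    filter_upwards [self_mem_nhdsWithin] with t ht
    have ht1 : t - 1 ≠ 0 := sub_ne_zero.2 ht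
    have hN1 : Real.log (1 - u * (1 - (1:ℝ)^j)) = 0 := by norm_num
    simp only [Pi.div_apply]
    rw [slope_def_field, slope_def_field, hN1, Real.log_one, sub_zero, sub_zero,
      div_div_div_cancel_right₀]
    exact ht1
  refine ⟨mono1, mono2, hlim, ?_⟩
  -- the bounds at j*u
  have bound1 : ∀ t : ℝ, 0 < t → t < 1 → f t ≤ (j:ℝ) * u := by
    intro t ht ht1
    have hlt : Real.log t < 0 := Real.log_neg ht ht1
    rw [hf]
    simp only
    rw [div_le_iff_of_neg hlt]
    have key := uqm_key2 hu (pow_pos ht j)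
    rw [Real.log_pow] at key
    have : (1-u) + u * t^j = 1 - u * (1 - t^j) := by ring
    rw [this] at key
    nlinarith [key]
  have bound2 : ∀ t : ℝ, 1 < t → (j:ℝ) * u ≤ f t := by
    intro t ht
    have hlt : 0 < Real.log t := Real.log_pos ht
    rw [hf]
    simp only
    rw [le_div_iff₀ hlt]
    have key := uqm_key2 hu (pow_pos (lt_trans one_pos ht) j)
    rw [Real.log_pow] at key
    have : (1-u) + u * t^j = 1 - u * (1 - t^j) := by ring
    rw [this] at key
    nlinarith [key]
  intro s t hs hst hs1 ht1
  rcases lt_or_gt_of_ne ht1 with htlt | htgt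
  · exact mono1 ⟨hs, hst.trans htlt⟩ ⟨lt_trans hs hst, htlt⟩ hst.le
  · rcases lt_or_gt_of_ne hs1 with hslt | hsgt
    · exact le_trans (bound1 s hs hslt) (bound2 t htgt)
    · exact mono2 hsgt (hsgt.trans hst) hst.le
end

section
/- Let S_n^ℓ denote the number of permutations of [n] with exactly ℓ inversions. Then binom(n−1, ℓ) ≤ S_n^ℓ ≤ binom(n+ℓ, ℓ), and consequently for each fixed ℓ, S_n^ℓ / n^ℓ → 1/ℓ! as n → ∞. -/
open Filter

/-- The number of permutations of `[n]` with exactly `ℓ` inversions. -/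
def numPermsWithInv (n ℓ : ℕ) : ℕ :=
  (Finset.univ.filter (fun σ : Equiv.Perm (Fin n) => InvCount n σ = ℓ)).card

section Aux
open Finset

def insPerm {n : ℕ} (p : Fin (n+1)) (τ : Equiv.Perm (Fin n)) : Equiv.Perm (Fin (n+1)) :=
  (finSuccEquiv' (0 : Fin (n+1))).trans ((τ.optionCongr).trans (finSuccEquiv' p).symm)

@[simp] lemma insPerm_zero {n : ℕ} (p : Fin (n+1)) (τ : Equiv.Perm (Fin n)) :
    insPerm p τ 0 = p := by
  simp [insPerm, finSuccEquiv'_at]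

@[simp] lemma insPerm_succ {n : ℕ} (p : Fin (n+1)) (τ : Equiv.Perm (Fin n)) (j : Fin n) :
    insPerm p τ j.succ = p.succAbove (τ j) := by
  have h : (0 : Fin (n+1)).succAbove j = j.succ := Fin.zero_succAbove j
  rw [insPerm]
  simp only [Equiv.trans_apply, ← h, finSuccEquiv'_succAbove, Equiv.optionCongr_apply,
    Option.map_some, finSuccEquiv'_symm_some]

lemma card_filter_val_lt (n k : ℕ) (hk : k ≤ n) :
    (univ.filter (fun v : Fin n => (v : ℕ) < k)).card = k := by
  rw [Finset.card_nbij (fun v : Fin n => (v : ℕ)) (t := Finset.range k)]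
  · exact Finset.card_range k
  · intro a ha; simp at ha ⊢; exact ha
  · intro a _ b _ h; exact Fin.val_injective h
  · intro m hm
    simp only [Finset.coe_range, Set.mem_Iio] at hm
    exact ⟨⟨m, lt_of_lt_of_le hm hk⟩, by simp [hm]⟩

lemma succAbove_lt_self_iff {n : ℕ} (p : Fin (n+1)) (x : Fin n) :
    p.succAbove x < p ↔ (x : ℕ) < (p : ℕ) := by
  rw [Fin.succAbove_lt_iff_castSucc_lt, Fin.lt_def, Fin.coe_castSucc]

lemma invCount_insPerm {n : ℕ} (p : Fin (n+1)) (τ : Equiv.Perm (Fin n)) :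
    InvCount (n+1) (insPerm p τ) = (p : ℕ) + InvCount n τ := by
  classical
  set σ := insPerm p τ with hσ
  have hsplit := Finset.card_filter_add_card_filter_not
    (s := univ.filter (fun q : Fin (n+1) × Fin (n+1) => q.1 < q.2 ∧ σ q.2 < σ q.1))
    (p := fun q : Fin (n+1) × Fin (n+1) => q.1 = 0)
  rw [InvCount, ← hsplit]
  congr 1
  · -- pairs with first coordinate 0 : count = p
    rw [show ((p : ℕ)) = (univ.filter (fun v : Fin n => (v : ℕ) < (p : ℕ))).card from
      (card_filter_val_lt n p (Fin.is_le p)).symm]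
    refine Finset.card_bij'
      (fun q hq => τ (q.2.pred (by
        simp only [Finset.filter_filter, Finset.mem_filter] at hq
        exact Fin.pos_iff_ne_zero.mp (hq.2.2 ▸ hq.2.1.1))))
      (fun v _ => ((0 : Fin (n+1)), (τ.symm v).succ)) ?_ ?_ ?_ ?_
    · intro q hq
      simp only [Finset.filter_filter, Finset.mem_filter] at hq
      obtain ⟨-, ⟨h12, hlt⟩, h0⟩ := hq
      simp only [Finset.mem_filter, Finset.mem_univ, true_and]
      rw [← succAbove_lt_self_iff, ← insPerm_succ, Fin.succ_pred]
      rw [h0] at hlt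
      simpa [hσ] using hlt
    · intro v hv
      simp only [Finset.mem_filter, Finset.mem_univ, true_and] at hv
      simp only [Finset.filter_filter, Finset.mem_filter, Finset.mem_univ, true_and]
      refine ⟨⟨Fin.succ_pos _, ?_⟩, trivial⟩
      have : σ ((τ.symm v).succ) = p.succAbove v := by
        rw [hσ, insPerm_succ, Equiv.apply_symm_apply]
      rw [this]
      simpa [hσ, succAbove_lt_self_iff] using hv
    · intro q hq
      simp only [Finset.filter_filter, Finset.mem_filter] at hq
      obtain ⟨-, -, h0⟩ := hq
      ext
      · simp [h0]
      · simp [Fin.succ_pred]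
    · intro v hv
      simp [Fin.pred_succ]
  · -- pairs with both coordinates positive : count = InvCount τ
    rw [InvCount]
    refine Finset.card_bij'
      (fun q hq => (q.1.pred (by
          simp only [Finset.filter_filter, Finset.mem_filter] at hq; exact hq.2.2),
        q.2.pred (by
          simp only [Finset.filter_filter, Finset.mem_filter] at hq
          exact Fin.pos_iff_ne_zero.mp (lt_trans (Fin.pos_iff_ne_zero.mpr hq.2.2) hq.2.1.1))))
      (fun q _ => (q.1.succ, q.2.succ)) ?_ ?_ ?_ ?_
    · intro q hq
      simp only [Finset.filter_filter, Finset.mem_filter] at hq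
      obtain ⟨-, ⟨h12, hlt⟩, h0⟩ := hq
      simp only [Finset.mem_filter, Finset.mem_univ, true_and]
      constructor
      · rw [Fin.pred_lt_pred_iff]; exact h12
      · rw [← Fin.succAbove_lt_succAbove_iff (p := p), ← insPerm_succ, ← insPerm_succ,
          Fin.succ_pred, Fin.succ_pred]
        exact hlt
    · intro q hq
      simp only [Finset.mem_filter, Finset.mem_univ, true_and] at hq
      simp only [Finset.filter_filter, Finset.mem_filter, Finset.mem_univ, true_and]
      refine ⟨⟨by simpa using hq.1, ?_⟩, Fin.succ_ne_zero _⟩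
      rw [hσ, insPerm_succ, insPerm_succ, Fin.succAbove_lt_succAbove_iff]
      exact hq.2
    · intro q hq
      ext <;> simp [Fin.succ_pred]
    · intro q hq
      ext <;> simp [Fin.pred_succ]

/-- Recover `τ` from `σ`. -/
def remPerm {n : ℕ} (σ : Equiv.Perm (Fin (n+1))) : Equiv.Perm (Fin n) :=
  Equiv.removeNone (((finSuccEquiv' (0 : Fin (n+1))).symm.trans σ).trans (finSuccEquiv' (σ 0)))

lemma remPerm_spec {n : ℕ} (σ : Equiv.Perm (Fin (n+1))) (j : Fin n) :
    (σ 0).succAbove (remPerm σ j) = σ j.succ := by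
  have hne : σ j.succ ≠ σ 0 := fun h => (Fin.succ_ne_zero j) (σ.injective h)
  obtain ⟨z, hz⟩ := Fin.exists_succAbove_eq hne
  have hE : (((finSuccEquiv' (0 : Fin (n+1))).symm.trans σ).trans (finSuccEquiv' (σ 0)))
      (some j) = some z := by
    simp only [Equiv.trans_apply]
    rw [show ((finSuccEquiv' (0 : Fin (n+1))).symm (some j)) = j.succ by
      rw [finSuccEquiv'_symm_some, Fin.zero_succAbove]]
    rw [← hz, finSuccEquiv'_succAbove]
  have := Equiv.removeNone_some _ ⟨z, hE⟩
  rw [hE] at this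
  have : remPerm σ j = z := Option.some_injective _ this
  rw [remPerm] at this ⊢
  rw [this, hz]

lemma insPerm_remPerm {n : ℕ} (σ : Equiv.Perm (Fin (n+1))) :
    insPerm (σ 0) (remPerm σ) = σ := by
  apply Equiv.ext
  intro i
  induction i using Fin.cases with
  | zero => simp
  | succ j => rw [insPerm_succ, remPerm_spec]

lemma insPerm_injective {n : ℕ} (p : Fin (n+1)) : Function.Injective (insPerm p) := by
  intro τ₁ τ₂ h
  apply Equiv.ext
  intro j
  have := congrArg (fun σ : Equiv.Perm (Fin (n+1)) => σ j.succ) h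
  simp only [insPerm_succ] at this
  exact Fin.succAbove_right_injective this

lemma remPerm_insPerm {n : ℕ} (p : Fin (n+1)) (τ : Equiv.Perm (Fin n)) :
    remPerm (insPerm p τ) = τ := by
  apply insPerm_injective p
  have h0 : insPerm p τ 0 = p := insPerm_zero p τ
  calc insPerm p (remPerm (insPerm p τ)) = insPerm (insPerm p τ 0) (remPerm (insPerm p τ)) := by
        rw [h0]
    _ = insPerm p τ := insPerm_remPerm _

lemma card_fiber {n ℓ : ℕ} (p : Fin (n+1)) :
    ((univ : Finset (Equiv.Perm (Fin (n+1)))).filter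
      (fun σ => σ 0 = p ∧ InvCount (n+1) σ = ℓ)).card
      = if (p : ℕ) ≤ ℓ then numPermsWithInv n (ℓ - (p : ℕ)) else 0 := by
  classical
  split_ifs with hp
  · rw [numPermsWithInv]
    refine Finset.card_nbij' (fun σ => remPerm σ) (fun τ => insPerm p τ) ?_ ?_ ?_ ?_
    · intro σ hσ
      simp only [Finset.mem_coe, Finset.mem_filter, Finset.mem_univ, true_and] at hσ ⊢
      obtain ⟨h0, hinv⟩ := hσ
      have := invCount_insPerm (σ 0) (remPerm σ)
      rw [insPerm_remPerm, hinv, h0] at this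
      omega
    · intro τ hτ
      simp only [Finset.mem_coe, Finset.mem_filter, Finset.mem_univ, true_and] at hτ ⊢
      refine ⟨insPerm_zero p τ, ?_⟩
      rw [invCount_insPerm, hτ]
      omega
    · intro σ hσ
      simp only [Finset.mem_coe, Finset.mem_filter, Finset.mem_univ, true_and] at hσ
      simpa only [hσ.1] using insPerm_remPerm σ
    · intro τ _
      exact remPerm_insPerm p τ
  · apply Finset.card_eq_zero.mpr
    rw [Finset.filter_eq_empty_iff]
    intro σ _
    rintro ⟨h0, hinv⟩
    apply hp
    have := invCount_insPerm (σ 0) (remPerm σ)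
    rw [insPerm_remPerm, hinv, h0] at this
    omega

lemma numPermsWithInv_succ (n ℓ : ℕ) :
    numPermsWithInv (n+1) ℓ
      = ∑ k ∈ Finset.range (n+1), if k ≤ ℓ then numPermsWithInv n (ℓ - k) else 0 := by
  classical
  rw [numPermsWithInv,
    Finset.card_eq_sum_card_fiberwise (f := fun σ : Equiv.Perm (Fin (n+1)) => σ 0)
      (t := univ) (fun x _ => Finset.mem_univ _)]
  rw [← Fin.sum_univ_eq_sum_range (fun k => if k ≤ ℓ then numPermsWithInv n (ℓ - k) else 0)]
  apply Finset.sum_congr rfl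
  intro p _
  rw [Finset.filter_filter]
  have : (univ.filter (fun σ : Equiv.Perm (Fin (n+1)) => InvCount (n+1) σ = ℓ ∧ σ 0 = p))
      = (univ.filter (fun σ : Equiv.Perm (Fin (n+1)) => σ 0 = p ∧ InvCount (n+1) σ = ℓ)) := by
    apply Finset.filter_congr; intro σ _; exact and_comm
  rw [this, card_fiber]

lemma numPermsWithInv_zero (ℓ : ℕ) : numPermsWithInv 0 ℓ = if ℓ = 0 then 1 else 0 := by
  classical
  have h0 : ∀ σ : Equiv.Perm (Fin 0), InvCount 0 σ = 0 := by
    intro σ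
    rw [InvCount]
    apply Finset.card_eq_zero.mpr
    rw [Finset.filter_eq_empty_iff]
    intro q _
    exact absurd q.1.2 (by omega)
  rw [numPermsWithInv]
  split_ifs with h
  · subst h
    rw [Finset.filter_true_of_mem (fun σ _ => h0 σ)]
    simp [Finset.card_univ]
  · apply Finset.card_eq_zero.mpr
    rw [Finset.filter_eq_empty_iff]
    intro σ _
    rw [h0 σ]
    omega

lemma lower_bound : ∀ n ℓ : ℕ, Nat.choose n ℓ ≤ numPermsWithInv (n+1) ℓ := by
  intro n
  induction n with
  | zero =>
    intro ℓ
    rw [numPermsWithInv_succ]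
    rw [Finset.range_one, Finset.sum_singleton, if_pos (Nat.zero_le ℓ), Nat.sub_zero,
      numPermsWithInv_zero]
    cases ℓ with
    | zero => simp
    | succ m => simp
  | succ n ih =>
    intro ℓ
    rw [numPermsWithInv_succ]
    cases ℓ with
    | zero =>
      calc Nat.choose (n+1) 0 = Nat.choose n 0 := by simp
        _ ≤ numPermsWithInv (n+1) 0 := ih 0
        _ ≤ _ := by
            refine le_trans ?_ (Finset.single_le_sum (f := fun k =>
              if k ≤ 0 then numPermsWithInv (n+1) (0 - k) else 0)
              (fun _ _ => Nat.zero_le _) (Finset.mem_range.mpr (by omega) : 0 ∈ Finset.range (n+2)))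
            simp
    | succ m =>
      have hsub : ({0, 1} : Finset ℕ) ⊆ Finset.range (n+2) := by
        intro x hx
        simp only [Finset.mem_insert, Finset.mem_singleton] at hx
        rcases hx with rfl | rfl <;> simp [Finset.mem_range] <;> omega
      calc Nat.choose (n+1) (m+1) = Nat.choose n m + Nat.choose n (m+1) :=
            Nat.choose_succ_succ n m
        _ ≤ numPermsWithInv (n+1) m + numPermsWithInv (n+1) (m+1) :=
            Nat.add_le_add (ih m) (ih (m+1))
        _ = ∑ k ∈ ({0, 1} : Finset ℕ),
              (if k ≤ m + 1 then numPermsWithInv (n+1) (m + 1 - k) else 0) := by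
            rw [Finset.sum_insert (by simp), Finset.sum_singleton]
            simp [Nat.add_comm]
        _ ≤ _ := Finset.sum_le_sum_of_subset hsub

lemma hockey (n ℓ : ℕ) :
    ∑ j ∈ Finset.range (ℓ+1), Nat.choose (n + j) j = Nat.choose (n + ℓ + 1) ℓ := by
  induction ℓ with
  | zero => simp
  | succ m ih =>
    rw [Finset.sum_range_succ, ih]
    rw [show n + (m + 1) = n + m + 1 by omega,
      Nat.choose_succ_succ (n + m + 1) m]

lemma upper_bound : ∀ n ℓ : ℕ, numPermsWithInv n ℓ ≤ Nat.choose (n + ℓ) ℓ := by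
  intro n
  induction n with
  | zero =>
    intro ℓ
    rw [numPermsWithInv_zero]
    split_ifs with h
    · simp [h]
    · exact Nat.zero_le _
  | succ n ih =>
    intro ℓ
    rw [numPermsWithInv_succ]
    calc ∑ k ∈ Finset.range (n+1), (if k ≤ ℓ then numPermsWithInv n (ℓ - k) else 0)
        ≤ ∑ k ∈ Finset.range (n+1),
            (if k ≤ ℓ then Nat.choose (n + (ℓ - k)) (ℓ - k) else 0) := by
          apply Finset.sum_le_sum
          intro k _
          split_ifs
          · exact ih (ℓ - k)
          · exact le_refl 0
      _ = ∑ k ∈ (Finset.range (n+1)).filter (· ≤ ℓ), Nat.choose (n + (ℓ - k)) (ℓ - k) := by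
          rw [Finset.sum_filter]
      _ ≤ ∑ k ∈ Finset.range (ℓ+1), Nat.choose (n + (ℓ - k)) (ℓ - k) := by
          apply Finset.sum_le_sum_of_subset
          intro x hx
          simp only [Finset.mem_filter, Finset.mem_range] at hx ⊢
          omega
      _ = ∑ j ∈ Finset.range (ℓ+1), Nat.choose (n + j) j := by
          rw [← Finset.sum_range_reflect (fun j => Nat.choose (n + j) j) (ℓ+1)]
          apply Finset.sum_congr rfl
          intro k hk
          simp only [Finset.mem_range] at hk
          congr 1 <;> omega
      _ = Nat.choose (n + ℓ + 1) ℓ := hockey n ℓ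
      _ = Nat.choose (n + 1 + ℓ) ℓ := by rw [show n + ℓ + 1 = n + 1 + ℓ by omega]

lemma prod_ratio_tendsto (ℓ : ℕ) (c : ℕ → ℝ) :
    Tendsto (fun n : ℕ => ∏ i ∈ Finset.range ℓ, (((n : ℝ) + c i) / n)) atTop (nhds 1) := by
  have h1 : Tendsto (fun n : ℕ => ∏ i ∈ Finset.range ℓ, (1 + c i / n)) atTop
      (nhds (∏ i ∈ Finset.range ℓ, 1)) := by
    apply tendsto_finset_prod
    intro i _
    have := tendsto_const_div_atTop_nhds_zero_nat (c i)
    have := (tendsto_const_nhds (x := (1:ℝ)) (f := atTop)).add this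
    simpa using this
  rw [Finset.prod_const_one] at h1
  apply h1.congr'
  filter_upwards [eventually_ge_atTop 1] with n hn
  apply Finset.prod_congr rfl
  intro i _
  have hn' : (n : ℝ) ≠ 0 := by positivity
  field_simp

lemma choose_cast_prod (m ℓ : ℕ) (h : ℓ ≤ m) :
    (Nat.choose m ℓ : ℝ) = (∏ i ∈ Finset.range ℓ, ((m - i : ℕ) : ℝ)) / (Nat.factorial ℓ : ℝ) := by
  have h1 : m.descFactorial ℓ = Nat.factorial ℓ * Nat.choose m ℓ :=
    Nat.descFactorial_eq_factorial_mul_choose m ℓ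
  have h2 : m.descFactorial ℓ = ∏ i ∈ Finset.range ℓ, (m - i) :=
    Nat.descFactorial_eq_prod_range m ℓ
  have := h2 ▸ h1
  have hcast : ((∏ i ∈ Finset.range ℓ, (m - i) : ℕ) : ℝ)
      = (Nat.factorial ℓ : ℝ) * (Nat.choose m ℓ : ℝ) := by
    rw [this]; push_cast; ring
  rw [Nat.cast_prod] at hcast
  have hfac : (Nat.factorial ℓ : ℝ) ≠ 0 := by positivity
  field_simp
  linarith [hcast]

lemma lim_gen (ℓ : ℕ) (m : ℕ → ℕ) (c : ℕ → ℝ)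
    (hm : ∀ᶠ n : ℕ in atTop, ℓ ≤ m n ∧ ∀ i ∈ Finset.range ℓ, ((m n - i : ℕ) : ℝ) = n + c i) :
    Tendsto (fun n : ℕ => (Nat.choose (m n) ℓ : ℝ) / (n : ℝ) ^ ℓ) atTop
      (nhds (1 / (Nat.factorial ℓ : ℝ))) := by
  have key : Tendsto (fun n : ℕ =>
      (1 / (Nat.factorial ℓ : ℝ)) * ∏ i ∈ Finset.range ℓ, (((n : ℝ) + c i) / n)) atTop
      (nhds ((1 / (Nat.factorial ℓ : ℝ)) * 1)) :=
    (tendsto_const_nhds).mul (prod_ratio_tendsto ℓ c)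
  rw [mul_one] at key
  apply key.congr'
  filter_upwards [hm, eventually_ge_atTop 1] with n hn hn1
  obtain ⟨hℓ, hc⟩ := hn
  rw [choose_cast_prod (m n) ℓ hℓ, Finset.prod_congr rfl hc]
  have hne : (n : ℝ) ≠ 0 := by
    have : (1:ℝ) ≤ (n:ℝ) := by exact_mod_cast hn1
    linarith
  rw [Finset.prod_div_distrib, Finset.prod_const, Finset.card_range]
  field_simp

end Aux

/-- `binom(n−1,ℓ) ≤ S_n^ℓ ≤ binom(n+ℓ,ℓ)`, and hence `S_n^ℓ/n^ℓ → 1/ℓ!` as `n → ∞`. -/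
theorem numPermsWithInv_bounds_and_limit (ℓ : ℕ) :
    (∀ n : ℕ, 1 ≤ n →
      Nat.choose (n - 1) ℓ ≤ numPermsWithInv n ℓ ∧
      numPermsWithInv n ℓ ≤ Nat.choose (n + ℓ) ℓ) ∧
    Tendsto (fun n : ℕ => (numPermsWithInv n ℓ : ℝ) / (n : ℝ) ^ ℓ) atTop
      (nhds (1 / (Nat.factorial ℓ : ℝ))) := by
  have hbounds : ∀ n : ℕ, 1 ≤ n →
      Nat.choose (n - 1) ℓ ≤ numPermsWithInv n ℓ ∧
      numPermsWithInv n ℓ ≤ Nat.choose (n + ℓ) ℓ := by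
    intro n hn
    cases n with
    | zero => omega
    | succ m => exact ⟨by simpa using lower_bound m ℓ, upper_bound (m+1) ℓ⟩
  refine ⟨hbounds, ?_⟩
  -- lower limit
  have hlow : Tendsto (fun n : ℕ => (Nat.choose (n - 1) ℓ : ℝ) / (n : ℝ) ^ ℓ) atTop
      (nhds (1 / (Nat.factorial ℓ : ℝ))) := by
    apply lim_gen ℓ (fun n => n - 1) (fun i => -1 - (i : ℝ))
    filter_upwards [eventually_ge_atTop (ℓ + 1)] with n hn
    refine ⟨by omega, ?_⟩
    intro i hi
    simp only [Finset.mem_range] at hi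
    have h1 : i ≤ n - 1 := by omega
    have h2 : 1 ≤ n := by omega
    rw [Nat.cast_sub h1, Nat.cast_sub h2]
    push_cast
    ring
  have hup : Tendsto (fun n : ℕ => (Nat.choose (n + ℓ) ℓ : ℝ) / (n : ℝ) ^ ℓ) atTop
      (nhds (1 / (Nat.factorial ℓ : ℝ))) := by
    apply lim_gen ℓ (fun n => n + ℓ) (fun i => (ℓ : ℝ) - (i : ℝ))
    filter_upwards [eventually_ge_atTop 0] with n _
    refine ⟨by omega, ?_⟩
    intro i hi
    simp only [Finset.mem_range] at hi
    have h1 : i ≤ n + ℓ := by omega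
    rw [Nat.cast_sub h1]
    push_cast
    ring
  apply tendsto_of_tendsto_of_tendsto_of_le_of_le' hlow hup
  · filter_upwards [eventually_ge_atTop 1] with n hn
    have := (hbounds n hn).1
    have hpos : (0:ℝ) < (n : ℝ) ^ ℓ := by
      have : (0:ℝ) < (n:ℝ) := by exact_mod_cast hn
      positivity
    gcongr
  · filter_upwards [eventually_ge_atTop 1] with n hn
    have := (hbounds n hn).2
    have hpos : (0:ℝ) < (n : ℝ) ^ ℓ := by
      have : (0:ℝ) < (n:ℝ) := by exact_mod_cast hn
      positivity
    gcongr
end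

section
/- Let T_k be the k-th jumping time of a monotone Mallows process, so that P(T_k > t) = π_{n,t}(Inv ≤ k−1). Then for fixed k, as n → ∞, n·T_k converges in distribution to a Gamma(k,1) random variable; equivalently, P(n·T_k > t) → e^{−t} ∑_{ℓ=0}^{k-1} t^ℓ/ℓ! for every t ≥ 0. -/
open Filter Finset

def lehmer (n : ℕ) (σ : Equiv.Perm (Fin n)) (i : Fin n) : ℕ :=
  (Finset.univ.filter (fun j : Fin n => i < j ∧ σ j < σ i)).card

theorem sum_lehmer (n : ℕ) (σ : Equiv.Perm (Fin n)) :
    ∑ i : Fin n, lehmer n σ i = InvCount n σ := by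
  simp only [lehmer, InvCount, Finset.card_filter]
  rw [Fintype.sum_prod_type]

theorem card_filter_apply_lt (n : ℕ) (σ : Equiv.Perm (Fin n)) (a : Fin n) :
    (Finset.univ.filter (fun j : Fin n => σ j < a)).card = (a : ℕ) := by
  have h1 : (Finset.univ.filter (fun j : Fin n => σ j < a))
      = (Finset.univ.filter (fun v : Fin n => v < a)).image σ.symm := by
    ext j
    simp only [Finset.mem_filter, Finset.mem_image, Finset.mem_univ, true_and]
    constructor
    · intro h; exact ⟨σ j, h, by simp⟩
    · rintro ⟨v, hv, rfl⟩; simpa using hv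
  have h2 : (Finset.univ.filter (fun v : Fin n => v < a)) = Finset.Iio a := by
    ext v; simp
  rw [h1, Finset.card_image_of_injective _ σ.symm.injective, h2, Fin.card_Iio]

theorem card_filter_apply_mem_Ico (n : ℕ) (σ : Equiv.Perm (Fin n)) (a b : Fin n) :
    (Finset.univ.filter (fun j : Fin n => a ≤ σ j ∧ σ j < b)).card = (b : ℕ) - (a : ℕ) := by
  have h1 : (Finset.univ.filter (fun j : Fin n => a ≤ σ j ∧ σ j < b))
      = (Finset.Ico a b).image σ.symm := by
    ext j
    simp only [Finset.mem_filter, Finset.mem_image, Finset.mem_univ, true_and, Finset.mem_Ico]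
    constructor
    · intro h; exact ⟨σ j, h, by simp⟩
    · rintro ⟨v, hv, rfl⟩; simpa using hv
  rw [h1, Finset.card_image_of_injective _ σ.symm.injective, Fin.card_Ico]

/-- Key identity: `σ i = #{j < i : σ j < σ i} + lehmer σ i`. -/
theorem lehmer_key (n : ℕ) (σ : Equiv.Perm (Fin n)) (i : Fin n) :
    ((σ i : ℕ)) = (Finset.univ.filter (fun j : Fin n => j < i ∧ σ j < σ i)).card
      + lehmer n σ i := by
  rw [← card_filter_apply_lt n σ (σ i), lehmer]
  rw [← Finset.card_union_of_disjoint]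
  · congr 1
    ext j
    simp only [Finset.mem_union, Finset.mem_filter, Finset.mem_univ, true_and]
    constructor
    · intro h
      rcases lt_trichotomy j i with hj | hj | hj
      · exact Or.inl ⟨hj, h⟩
      · subst hj; exact absurd h (lt_irrefl _)
      · exact Or.inr ⟨hj, h⟩
    · rintro (⟨_, h⟩ | ⟨_, h⟩) <;> exact h
  · rw [Finset.disjoint_filter]
    rintro j _ ⟨h1, _⟩ ⟨h2, _⟩
    exact absurd (h1.trans h2) (lt_irrefl _)


section
variable {n : ℕ}

theorem lehmer_step (σ τ : Equiv.Perm (Fin n)) (hL : lehmer n σ = lehmer n τ) (i : Fin n)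
    (IH : ∀ j, j < i → σ j = τ j) : ¬ (σ i < τ i) := by
  intro h
  have hL' : lehmer n σ i = lehmer n τ i := by rw [hL]
  have keyσ := lehmer_key n σ i
  have keyτ := lehmer_key n τ i
  set P := Finset.univ.filter (fun j : Fin n => j < i ∧ σ j < σ i) with hP
  set Q := Finset.univ.filter (fun j : Fin n => j < i ∧ σ j < τ i) with hQ
  have hQτ : (Finset.univ.filter (fun j : Fin n => j < i ∧ τ j < τ i)) = Q := by
    apply Finset.filter_congr
    intro j _
    by_cases hj : j < i
    · rw [IH j hj]
    · simp [hj]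
  rw [hQτ] at keyτ
  have hPQ : P ⊆ Q := by
    intro j hj
    rw [hP, Finset.mem_filter] at hj
    rw [hQ, Finset.mem_filter]
    exact ⟨hj.1, hj.2.1, hj.2.2.trans h⟩
  have hcard : Q.card - P.card = (τ i : ℕ) - (σ i : ℕ) := by omega
  have hsdiff : Q \ P = Finset.univ.filter (fun j : Fin n => j < i ∧ σ i ≤ σ j ∧ σ j < τ i) := by
    ext j
    simp only [hP, hQ, Finset.mem_sdiff, Finset.mem_filter, Finset.mem_univ, true_and]
    constructor
    · rintro ⟨⟨hj, hσ⟩, hnp⟩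
      refine ⟨hj, ?_, hσ⟩
      by_contra hc
      exact hnp ⟨hj, by omega⟩
    · rintro ⟨hj, hle, hlt⟩
      exact ⟨⟨hj, hlt⟩, fun hc => by omega⟩
  have hcard2 : (Q \ P).card = (τ i : ℕ) - (σ i : ℕ) := by
    rw [Finset.card_sdiff_of_subset hPQ]; exact hcard
  set R := Finset.univ.filter (fun j : Fin n => σ i ≤ σ j ∧ σ j < τ i) with hR
  have hcardR : R.card = (τ i : ℕ) - (σ i : ℕ) := card_filter_apply_mem_Ico n σ (σ i) (τ i)
  have hiR : i ∈ R := by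
    rw [hR, Finset.mem_filter]
    exact ⟨Finset.mem_univ _, le_refl _, h⟩
  have hiQP : i ∉ Q \ P := by
    rw [hsdiff, Finset.mem_filter]
    rintro ⟨_, hi, _⟩
    exact absurd hi (lt_irrefl _)
  have hsub : insert i (Q \ P) ⊆ R := by
    intro j hj
    rcases Finset.mem_insert.1 hj with rfl | hj
    · exact hiR
    · rw [hsdiff, Finset.mem_filter] at hj
      rw [hR, Finset.mem_filter]
      exact ⟨Finset.mem_univ _, hj.2.2⟩
  have := Finset.card_le_card hsub
  rw [Finset.card_insert_of_notMem hiQP, hcard2, hcardR] at this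
  have hlt : (σ i : ℕ) < (τ i : ℕ) := h
  omega

theorem lehmer_injective (σ τ : Equiv.Perm (Fin n)) (hL : lehmer n σ = lehmer n τ) : σ = τ := by
  have main : ∀ m : ℕ, ∀ i : Fin n, (i : ℕ) = m → σ i = τ i := by
    intro m
    induction m using Nat.strong_induction_on with
    | _ m IH =>
      intro i him
      have hIH : ∀ j, j < i → σ j = τ j := by
        intro j hj
        exact IH (j : ℕ) (by omega) j rfl
      have h1 := lehmer_step σ τ hL i hIH
      have h2 := lehmer_step τ σ hL.symm i (fun j hj => (hIH j hj).symm)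
      have : (σ i : ℕ) = (τ i : ℕ) := by
        have a1 : ¬ ((σ i : ℕ) < (τ i : ℕ)) := h1
        have a2 : ¬ ((τ i : ℕ) < (σ i : ℕ)) := h2
        omega
      exact Fin.ext this
  ext i
  exact congrArg Fin.val (main (i : ℕ) i rfl)
end


section
variable {n : ℕ}

theorem numPermsWithInv_le (n ℓ : ℕ) : numPermsWithInv n ℓ ≤ (n + ℓ - 1).choose ℓ := by
  have h1 : numPermsWithInv n ℓ = Fintype.card {σ : Equiv.Perm (Fin n) // InvCount n σ = ℓ} := by
    rw [Fintype.card_subtype]; rfl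
  have h2 : (n + ℓ - 1).choose ℓ = Fintype.card (Sym (Fin n) ℓ) := by
    rw [Sym.card_sym_eq_choose, Fintype.card_fin]
  rw [h1, h2]
  apply Fintype.card_le_of_injective
    (fun x => ⟨∑ i : Fin n, Multiset.replicate (lehmer n x.1 i) i, by
      have hcs : ∀ (s : Finset (Fin n)) (f : Fin n → Multiset (Fin n)),
          Multiset.card (∑ i ∈ s, f i) = ∑ i ∈ s, Multiset.card (f i) := by
        intro s f
        induction s using Finset.cons_induction with
        | empty => simp
        | cons a s ha ih => simp [Finset.sum_cons, ih]
      rw [hcs]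
      simp only [Multiset.card_replicate]
      rw [sum_lehmer]
      exact x.2⟩)
  rintro ⟨σ, hσ⟩ ⟨τ, hτ⟩ h
  have hm : (∑ i : Fin n, Multiset.replicate (lehmer n σ i) i)
      = ∑ i : Fin n, Multiset.replicate (lehmer n τ i) i := by
    exact congrArg Subtype.val (by exact_mod_cast h)
  have hL : lehmer n σ = lehmer n τ := by
    funext j
    have := congrArg (Multiset.count j) hm
    simpa [Multiset.count_sum', Multiset.count_replicate] using this
  exact Subtype.ext (lehmer_injective σ τ hL)
end


section SwapPerm
variable {n : ℕ} (A : Finset ℕ) (hA : ∀ a ∈ A, a + 1 < n)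

/-- The product of the adjacent transpositions `(a, a+1)` for `a ∈ A`,
when no two elements of `A` are adjacent. -/
def swapFun : Fin n → Fin n := fun x =>
  if h : (x : ℕ) ∈ A then ⟨(x : ℕ) + 1, hA _ h⟩
  else if h2 : 1 ≤ (x : ℕ) ∧ (x : ℕ) - 1 ∈ A then ⟨(x : ℕ) - 1, by omega⟩
  else x

variable (hgap : ∀ a ∈ A, a + 1 ∉ A)

theorem swapFun_of_mem {x : Fin n} (h : (x : ℕ) ∈ A) : (swapFun A hA x : ℕ) = (x : ℕ) + 1 := by
  simp [swapFun, h]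

theorem swapFun_le (x : Fin n) : (swapFun A hA x : ℕ) ≤ (x : ℕ) + 1 := by
  unfold swapFun
  split_ifs <;> simp <;> omega

theorem le_swapFun (x : Fin n) : (x : ℕ) ≤ (swapFun A hA x : ℕ) + 1 := by
  unfold swapFun
  split_ifs <;> simp <;> omega

theorem swapFun_of_not_mem {x : Fin n} (h : (x : ℕ) ∉ A) : (swapFun A hA x : ℕ) ≤ (x : ℕ) := by
  unfold swapFun
  split_ifs <;> simp_all <;> omega

include hgap in
theorem swapFun_involutive : Function.Involutive (swapFun A hA) := by
  intro x
  by_cases h : (x : ℕ) ∈ A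
  · have h1 : (swapFun A hA x : ℕ) = (x : ℕ) + 1 := swapFun_of_mem A hA h
    have h2 : ((x : ℕ) + 1) ∉ A := hgap _ h
    apply Fin.ext
    rw [swapFun]
    rw [dif_neg (by rw [h1]; exact h2), dif_pos (by rw [h1]; simpa using h)]
    simp [h1]
  · by_cases h2 : 1 ≤ (x : ℕ) ∧ (x : ℕ) - 1 ∈ A
    · have h1 : (swapFun A hA x : ℕ) = (x : ℕ) - 1 := by
        rw [swapFun, dif_neg h, dif_pos h2]
      apply Fin.ext
      rw [swapFun, dif_pos (by rw [h1]; exact h2.2)]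
      simp [h1]; omega
    · have h1 : swapFun A hA x = x := by
        rw [swapFun, dif_neg h, dif_neg h2]
      rw [h1, swapFun, dif_neg h, dif_neg h2]

/-- The permutation given by the product of the adjacent transpositions. -/
def swapPerm : Equiv.Perm (Fin n) := (swapFun_involutive A hA hgap).toPerm

theorem swapPerm_apply (x : Fin n) : swapPerm A hA hgap x = swapFun A hA x := rfl

theorem swapPerm_eq_succ_iff (x : Fin n) :
    (swapPerm A hA hgap x : ℕ) = (x : ℕ) + 1 ↔ (x : ℕ) ∈ A := by
  constructor
  · intro h
    by_contra hx
    have := swapFun_of_not_mem A hA hx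
    rw [swapPerm_apply] at h
    omega
  · exact fun h => swapFun_of_mem A hA h

theorem invCount_swapPerm : InvCount n (swapPerm A hA hgap) = A.card := by
  rw [InvCount]
  symm
  apply Finset.card_bij (fun a ha => ((⟨a, by have := hA a ha; omega⟩ : Fin n),
    (⟨a + 1, hA a ha⟩ : Fin n)))
  · intro a ha
    simp only [Finset.mem_filter, Finset.mem_univ, true_and]
    constructor
    · show (a : ℕ) < a + 1; omega
    · show (swapPerm A hA hgap _ : ℕ) < (swapPerm A hA hgap _ : ℕ)
      have h1 : (swapFun A hA (⟨a, by have := hA a ha; omega⟩ : Fin n) : ℕ) = a + 1 :=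
        swapFun_of_mem A hA ha
      have h2 : (swapFun A hA (⟨a + 1, hA a ha⟩ : Fin n) : ℕ) = a := by
        rw [swapFun, dif_neg (by simpa using hgap a ha), dif_pos (by simpa using ha)]
        simp
      rw [swapPerm_apply, swapPerm_apply, h1, h2]
      omega
  · intro a ha b hb hab
    simpa using congrArg (fun p => (p.1 : ℕ)) hab
  · rintro ⟨i, j⟩ hp
    simp only [Finset.mem_filter, Finset.mem_univ, true_and] at hp
    obtain ⟨hij, hinv⟩ := hp
    have hij' : (i : ℕ) < (j : ℕ) := hij
    have hinv' : (swapFun A hA j : ℕ) < (swapFun A hA i : ℕ) := hinv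
    have hb1 : (swapFun A hA i : ℕ) ≤ (i : ℕ) + 1 := swapFun_le A hA i
    have hb2 : (j : ℕ) ≤ (swapFun A hA j : ℕ) + 1 := le_swapFun A hA j
    have hji : (j : ℕ) = (i : ℕ) + 1 := by omega
    have hiA : (i : ℕ) ∈ A := by
      by_contra hx
      have := swapFun_of_not_mem A hA hx
      omega
    refine ⟨(i : ℕ), hiA, ?_⟩
    have : ((i : ℕ) + 1) = (j : ℕ) := hji.symm
    exact Prod.ext (Fin.ext rfl) (Fin.ext this)

end SwapPerm

section Lower
variable {m ℓ : ℕ}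

/-- The positions associated to a subtype element `S` of `ℓ`-subsets of `Fin m`. -/
def posFun (S : {s : Finset (Fin m) // s.card = ℓ}) : Fin ℓ → ℕ :=
  fun j => ((S.1.orderEmbOfFin S.2 j : ℕ) + (j : ℕ))

theorem posFun_strictMono (S : {s : Finset (Fin m) // s.card = ℓ}) : StrictMono (posFun S) := by
  intro j j' hj
  have h1 : (S.1.orderEmbOfFin S.2 j : Fin m) < S.1.orderEmbOfFin S.2 j' :=
    (S.1.orderEmbOfFin S.2).strictMono hj
  have h2 : (j : ℕ) < (j' : ℕ) := hj
  have h3 : ((S.1.orderEmbOfFin S.2 j : Fin m) : ℕ) < ((S.1.orderEmbOfFin S.2 j' : Fin m) : ℕ) := h1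
  simp only [posFun]
  omega

/-- The set of positions. -/
def posSet (S : {s : Finset (Fin m) // s.card = ℓ}) : Finset ℕ :=
  Finset.univ.image (posFun S)

theorem posSet_spread (S : {s : Finset (Fin m) // s.card = ℓ}) :
    ∀ a ∈ posSet S, a + 1 ∉ posSet S := by
  intro a ha hb
  simp only [posSet, Finset.mem_image, Finset.mem_univ, true_and] at ha hb
  obtain ⟨j, rfl⟩ := ha
  obtain ⟨j', hj'⟩ := hb
  rcases lt_trichotomy j j' with h | h | h
  · have h1 : posFun S j < posFun S j' := posFun_strictMono S h
    have hj1 : (j : ℕ) + 1 ≤ (j' : ℕ) := Fin.lt_iff_val_lt_val.1 h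
    have h2 : (S.1.orderEmbOfFin S.2 j : ℕ) < (S.1.orderEmbOfFin S.2 j' : ℕ) :=
      (S.1.orderEmbOfFin S.2).strictMono h
    simp only [posFun] at hj'
    omega
  · subst h; simp [posFun] at hj'
  · have h1 : posFun S j' < posFun S j := posFun_strictMono S h
    omega

theorem posSet_lt (S : {s : Finset (Fin m) // s.card = ℓ}) :
    ∀ a ∈ posSet S, a + 1 < m + ℓ := by
  intro a ha
  simp only [posSet, Finset.mem_image, Finset.mem_univ, true_and] at ha
  obtain ⟨j, rfl⟩ := ha
  have h1 : ((S.1.orderEmbOfFin S.2 j : Fin m) : ℕ) < m := (S.1.orderEmbOfFin S.2 j).isLt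
  have h2 : (j : ℕ) < ℓ := j.isLt
  simp only [posFun]
  omega

theorem card_posSet (S : {s : Finset (Fin m) // s.card = ℓ}) : (posSet S).card = ℓ := by
  rw [posSet, Finset.card_image_of_injective _ (posFun_strictMono S).injective]
  simp

theorem posSet_inj : Function.Injective (posSet (m := m) (ℓ := ℓ)) := by
  intro S S' h
  have h1 : posFun S = posFun S' := by
    have e1 : posFun S = (posSet S).orderEmbOfFin (card_posSet S) :=
      Finset.orderEmbOfFin_unique (card_posSet S)
        (fun x => by simp [posSet]) (posFun_strictMono S)
    have e2 : posFun S' = (posSet S).orderEmbOfFin (card_posSet S) :=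
      Finset.orderEmbOfFin_unique (card_posSet S)
        (fun x => by rw [h]; simp [posSet]) (posFun_strictMono S')
    rw [e1, e2]
  have h2 : ∀ j : Fin ℓ, S.1.orderEmbOfFin S.2 j = S'.1.orderEmbOfFin S'.2 j := by
    intro j
    have := congrFun h1 j
    simp only [posFun] at this
    exact Fin.ext (by omega)
  apply Subtype.ext
  apply Finset.coe_injective
  rw [← Finset.range_orderEmbOfFin S.1 S.2, ← Finset.range_orderEmbOfFin S'.1 S'.2]
  ext x
  simp only [Set.mem_range]
  exact ⟨fun ⟨j, hj⟩ => ⟨j, by rw [← h2 j]; exact hj⟩, fun ⟨j, hj⟩ => ⟨j, by rw [h2 j]; exact hj⟩⟩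

end Lower

theorem le_numPermsWithInv (n ℓ : ℕ) (h : ℓ ≤ n) :
    (n - ℓ).choose ℓ ≤ numPermsWithInv n ℓ := by
  set m := n - ℓ with hm
  have hmn : m + ℓ = n := by omega
  have h1 : numPermsWithInv n ℓ = Fintype.card {σ : Equiv.Perm (Fin n) // InvCount n σ = ℓ} := by
    rw [Fintype.card_subtype]; rfl
  have h2 : m.choose ℓ = Fintype.card {s : Finset (Fin m) // s.card = ℓ} := by
    rw [Fintype.card_finset_len, Fintype.card_fin]
  rw [h1, h2]
  have hlt : ∀ S : {s : Finset (Fin m) // s.card = ℓ}, ∀ a ∈ posSet S, a + 1 < n := by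
    intro S a ha
    rw [← hmn]
    exact posSet_lt S a ha
  apply Fintype.card_le_of_injective (fun S =>
    ⟨swapPerm (posSet S) (hlt S) (posSet_spread S), by
      rw [invCount_swapPerm, card_posSet]⟩)
  intro S S' hSS
  have hperm : swapPerm (posSet S) (hlt S) (posSet_spread S)
      = swapPerm (posSet S') (hlt S') (posSet_spread S') := congrArg Subtype.val hSS
  apply posSet_inj
  ext a
  by_cases han : a < n
  · have := swapPerm_eq_succ_iff (posSet S) (hlt S) (posSet_spread S) (⟨a, han⟩ : Fin n)
    have h' := swapPerm_eq_succ_iff (posSet S') (hlt S') (posSet_spread S') (⟨a, han⟩ : Fin n)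
    rw [hperm] at this
    simp only [Fin.val_mk] at this h'
    rw [← this, ← h']
  · constructor <;> intro ha
    · exact absurd (hlt S a ha) (by omega)
    · exact absurd (hlt S' a ha) (by omega)


/-- `(n + c)/n → 1`. -/
theorem tendsto_add_const_div (c : ℝ) :
    Tendsto (fun n : ℕ => ((n : ℝ) + c) / n) atTop (nhds 1) := by
  have h1 : Tendsto (fun n : ℕ => 1 + c / n) atTop (nhds 1) := by
    have := (tendsto_const_nhds (x := (1:ℝ)) (f := atTop (α := ℕ))).add
      (tendsto_const_div_atTop_nhds_zero_nat c)
    simpa using this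
  apply h1.congr'
  filter_upwards [eventually_ge_atTop 1] with n hn
  have hn' : (n : ℝ) ≠ 0 := by positivity
  field_simp

/-- `choose (n - a + b) ℓ / n ^ ℓ → 1/ℓ!`. -/
theorem tendsto_choose_div_pow (ℓ a b : ℕ) :
    Tendsto (fun n : ℕ => (((n - a + b).choose ℓ : ℝ)) / (n : ℝ) ^ ℓ) atTop
      (nhds (1 / (Nat.factorial ℓ : ℝ))) := by
  have key : Tendsto (fun n : ℕ => (1 / (Nat.factorial ℓ : ℝ)) *
      ∏ j ∈ range ℓ, (((n : ℝ) + ((b : ℝ) - a - j)) / n)) atTop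
      (nhds (1 / (Nat.factorial ℓ : ℝ))) := by
    have hprod : Tendsto (fun n : ℕ => ∏ j ∈ range ℓ, (((n : ℝ) + ((b : ℝ) - a - j)) / n))
        atTop (nhds (∏ j ∈ range ℓ, 1)) := by
      apply tendsto_finset_prod
      intro j _
      exact tendsto_add_const_div _
    simp only [prod_const_one] at hprod
    simpa using (tendsto_const_nhds.mul hprod)
  apply key.congr'
  filter_upwards [eventually_ge_atTop (a + b + ℓ + 1)] with n hn
  have hn0 : (0:ℝ) < (n:ℝ) := by
    have : 0 < n := by omega
    exact_mod_cast this
  have hc : ((n - a + b).choose ℓ : ℝ) * (Nat.factorial ℓ : ℝ)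
      = ∏ j ∈ range ℓ, ((n : ℝ) + ((b:ℝ) - a - j)) := by
    have h1 : (n - a + b).descFactorial ℓ = Nat.factorial ℓ * (n - a + b).choose ℓ :=
      Nat.descFactorial_eq_factorial_mul_choose _ _
    have h2 : (n - a + b).descFactorial ℓ = ∏ j ∈ range ℓ, (n - a + b - j) :=
      Nat.descFactorial_eq_prod_range _ _
    have h3 : ((n - a + b).descFactorial ℓ : ℝ) = ∏ j ∈ range ℓ, ((n : ℝ) + ((b:ℝ) - a - j)) := by
      rw [h2, Nat.cast_prod]
      apply prod_congr rfl
      intro j hj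
      have hjℓ : j < ℓ := mem_range.1 hj
      have : ((n - a + b - j : ℕ) : ℝ) = (n : ℝ) - a + b - j := by
        have e : (n - a + b - j : ℕ) + a + j = n + b := by omega
        have := congrArg (fun x : ℕ => (x : ℝ)) e
        push_cast at this
        linarith
      rw [this]; ring
    rw [← h3, h1]
    push_cast
    ring
  have hpd : ∏ j ∈ range ℓ, ((n : ℝ) + ((b:ℝ) - a - j)) / (n:ℝ)
      = (∏ j ∈ range ℓ, ((n : ℝ) + ((b:ℝ) - a - j))) / (n:ℝ) ^ ℓ := by
    rw [prod_div_distrib, prod_const, card_range]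
  rw [hpd, ← hc]
  have hf : (Nat.factorial ℓ : ℝ) ≠ 0 := by positivity
  field_simp

/-- The ratio `S_n^ℓ / n^ℓ` tends to `1/ℓ!`. -/
theorem tendsto_numPermsWithInv_div_pow (ℓ : ℕ) :
    Tendsto (fun n : ℕ => (numPermsWithInv n ℓ : ℝ) / (n : ℝ) ^ ℓ) atTop
      (nhds (1 / (Nat.factorial ℓ : ℝ))) := by
  apply tendsto_of_tendsto_of_tendsto_of_le_of_le' (tendsto_choose_div_pow ℓ ℓ 0)
    (tendsto_choose_div_pow ℓ 1 ℓ)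
  · filter_upwards [eventually_ge_atTop (ℓ + 1)] with n hn
    have h := le_numPermsWithInv n ℓ (by omega)
    have hn0 : (0:ℝ) < (n:ℝ)^ℓ := by
      have : 0 < n := by omega
      positivity
    apply (div_le_div_iff_of_pos_right hn0).mpr
    simp only [Nat.add_zero]
    exact_mod_cast h
  · filter_upwards [eventually_ge_atTop 1] with n hn
    have h := numPermsWithInv_le n ℓ
    have he : n + ℓ - 1 = n - 1 + ℓ := by omega
    rw [he] at h
    have hn0 : (0:ℝ) < (n:ℝ)^ℓ := by
      have : 0 < n := by omega
      positivity
    apply (div_le_div_iff_of_pos_right hn0).mpr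
    exact_mod_cast h


/-- The numerator tends to `∑ t^ℓ/ℓ!`. -/
theorem tendsto_numerator (k : ℕ) (t : ℝ) :
    Tendsto (fun n : ℕ => ∑ ℓ ∈ range k, (numPermsWithInv n ℓ : ℝ) * (t / n) ^ ℓ) atTop
      (nhds (∑ ℓ ∈ range k, t ^ ℓ / (Nat.factorial ℓ : ℝ))) := by
  apply tendsto_finset_sum
  intro ℓ _
  have h : Tendsto (fun n : ℕ => ((numPermsWithInv n ℓ : ℝ) / (n : ℝ) ^ ℓ) * t ^ ℓ) atTop
      (nhds ((1 / (Nat.factorial ℓ : ℝ)) * t ^ ℓ)) :=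
    (tendsto_numPermsWithInv_div_pow ℓ).mul tendsto_const_nhds
  have he : (1 / (Nat.factorial ℓ : ℝ)) * t ^ ℓ = t ^ ℓ / (Nat.factorial ℓ : ℝ) := by ring
  rw [← he]
  apply h.congr'
  filter_upwards [eventually_ge_atTop 1] with n hn
  have hn0 : (n:ℝ) ≠ 0 := by
    have : 0 < n := hn
    positivity
  rw [div_pow]
  ring

/-- Weierstrass product inequality. -/
theorem one_sub_sum_le_prod_one_sub' {ι : Type*} (s : Finset ι) (f : ι → ℝ)
    (h0 : ∀ i ∈ s, 0 ≤ f i) (h1 : ∀ i ∈ s, f i ≤ 1) :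
    1 - ∑ i ∈ s, f i ≤ ∏ i ∈ s, (1 - f i) := by
  induction s using Finset.cons_induction with
  | empty => simp
  | cons a s ha ih =>
    rw [Finset.sum_cons, Finset.prod_cons]
    have ih' := ih (fun i hi => h0 i (Finset.mem_cons_of_mem hi))
      (fun i hi => h1 i (Finset.mem_cons_of_mem hi))
    have hfa0 : 0 ≤ f a := h0 a (Finset.mem_cons_self a s)
    have hfa1 : f a ≤ 1 := h1 a (Finset.mem_cons_self a s)
    have hs0 : 0 ≤ ∑ i ∈ s, f i := Finset.sum_nonneg (fun i hi => h0 i (Finset.mem_cons_of_mem hi))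
    nlinarith [ih']

theorem tendsto_prod_one_sub_pow (t : ℝ) (ht : 0 ≤ t) :
    Tendsto (fun n : ℕ => ∏ m ∈ Icc 1 n, (1 - (t / n) ^ m)) atTop (nhds 1) := by
  have hlo : Tendsto (fun n : ℕ => 1 - 2 * (t / n)) atTop (nhds 1) := by
    have h2 : Tendsto (fun n : ℕ => t / (n:ℝ)) atTop (nhds 0) :=
      tendsto_const_div_atTop_nhds_zero_nat t
    have := (tendsto_const_nhds (x := (1:ℝ)) (f := atTop (α := ℕ))).sub
      ((tendsto_const_nhds (x := (2:ℝ))).mul h2)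
    simpa using this
  apply tendsto_of_tendsto_of_tendsto_of_le_of_le' hlo tendsto_const_nhds
  · filter_upwards [eventually_ge_atTop (⌈2 * t⌉₊ + 1)] with n hn
    set x := t / (n : ℝ) with hx
    have hn0 : (0:ℝ) < n := by
      have : 0 < n := by omega
      exact_mod_cast this
    have hx0 : 0 ≤ x := by positivity
    have h2t : 2 * t ≤ (n:ℝ) := by
      calc 2 * t ≤ ⌈2 * t⌉₊ := Nat.le_ceil _
        _ ≤ (n : ℝ) := by exact_mod_cast Nat.le_of_lt (by omega)
    have hx2 : 2 * x ≤ 1 := by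
      have : 2 * x = (2 * t) / n := by rw [hx]; ring
      rw [this, div_le_one hn0]
      exact h2t
    have hx1 : x < 1 := by nlinarith
    have hsum : ∑ m ∈ Icc 1 n, x ^ m ≤ 2 * x := by
      have h1 : ∑ m ∈ Icc 1 n, x ^ m = x * ∑ j ∈ range n, x ^ j := by
        rw [← Finset.Ico_add_one_right_eq_Icc, Finset.sum_Ico_eq_sum_range]
        simp only [Nat.add_sub_cancel]
        rw [mul_sum]
        apply sum_congr rfl
        intro j _
        rw [pow_add, pow_one]
      have h2 : ∑ j ∈ range n, x ^ j ≤ 2 := by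
        rw [geom_sum_eq (by linarith : x ≠ 1)]
        have e : (x ^ n - 1) / (x - 1) = (1 - x ^ n) / (1 - x) := by
          rw [← neg_div_neg_eq]; ring_nf
        rw [e, div_le_iff₀ (by linarith : (0:ℝ) < 1 - x)]
        nlinarith [pow_nonneg hx0 n]
      calc ∑ m ∈ Icc 1 n, x ^ m = x * ∑ j ∈ range n, x ^ j := h1
        _ ≤ x * 2 := by nlinarith [h1 ▸ Finset.sum_nonneg (fun m _ => pow_nonneg hx0 m)]
        _ = 2 * x := by ring
    calc 1 - 2 * x ≤ 1 - ∑ m ∈ Icc 1 n, x ^ m := by linarith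
      _ ≤ ∏ m ∈ Icc 1 n, (1 - x ^ m) := by
          apply one_sub_sum_le_prod_one_sub'
          · intro m _; positivity
          · intro m hm
            apply pow_le_one₀ hx0 (le_of_lt hx1)
  · filter_upwards [eventually_gt_atTop ⌈t⌉₊] with n hn
    have hn0 : (0:ℝ) < n := by
      have : 0 < n := by omega
      exact_mod_cast this
    have hx0 : (0:ℝ) ≤ t / n := by positivity
    have hx1 : t / (n:ℝ) ≤ 1 := by
      rw [div_le_one hn0]
      calc t ≤ ⌈t⌉₊ := Nat.le_ceil _
        _ ≤ (n : ℝ) := by exact_mod_cast Nat.le_of_lt hn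
    apply Finset.prod_le_one
    · intro m hm
      nlinarith [pow_le_one₀ hx0 hx1 (n := m)]
    · intro m hm
      nlinarith [pow_nonneg hx0 m]

theorem tendsto_denominator (t : ℝ) (ht : 0 ≤ t) :
    Tendsto (fun n : ℕ => ∏ m ∈ Icc 1 n, ∑ ℓ ∈ range m, (t / n) ^ ℓ) atTop
      (nhds (Real.exp t)) := by
  have h1 : Tendsto (fun n : ℕ => (1 - t / n) ^ n) atTop (nhds (Real.exp (-t))) := by
    have := Real.tendsto_one_add_div_pow_exp (-t)
    apply this.congr
    intro n
    congr 1
    rw [neg_div]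
    ring
  have h2 : Tendsto (fun n : ℕ => (∏ m ∈ Icc 1 n, (1 - (t / n) ^ m)) / (1 - t / n) ^ n) atTop
      (nhds (1 / Real.exp (-t))) :=
    (tendsto_prod_one_sub_pow t ht).div h1 (Real.exp_ne_zero _)
  rw [one_div, ← Real.exp_neg, neg_neg] at h2
  apply h2.congr'
  filter_upwards [eventually_gt_atTop ⌈t⌉₊] with n hn
  have hn0 : (0:ℝ) < n := by
    have : 0 < n := by omega
    exact_mod_cast this
  have hx1 : t / (n:ℝ) < 1 := by
    rw [div_lt_one hn0]
    calc t ≤ ⌈t⌉₊ := Nat.le_ceil _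
      _ < (n : ℝ) := by exact_mod_cast hn
  set x := t / (n:ℝ) with hx
  have hgeom : ∀ m ∈ Icc 1 n, ∑ ℓ ∈ range m, x ^ ℓ = (1 - x ^ m) / (1 - x) := by
    intro m _
    rw [geom_sum_eq (by linarith : x ≠ 1)]
    rw [← neg_div_neg_eq]; ring_nf
  rw [Finset.prod_congr rfl hgeom, Finset.prod_div_distrib, Finset.prod_const,
    Nat.card_Icc]
  simp

theorem final_assembly (k : ℕ) (G : ℕ → ℝ → ℝ)
    (hG : ∀ n : ℕ, 1 ≤ n → ∀ t : ℝ, 0 ≤ t →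
      G n t = (∑ ℓ ∈ Finset.range k, (numPermsWithInv n ℓ : ℝ) * t ^ ℓ) /
        ∏ m ∈ Finset.Icc 1 n, ∑ ℓ ∈ Finset.range m, t ^ ℓ)
    (t : ℝ) (ht : 0 ≤ t) :
    Tendsto (fun n : ℕ => G n (t / n)) atTop
      (nhds (Real.exp (-t) * ∑ ℓ ∈ Finset.range k, t ^ ℓ / (Nat.factorial ℓ : ℝ))) := by
  have h := (tendsto_numerator k t).div (tendsto_denominator t ht) (Real.exp_ne_zero t)
  have he : (∑ ℓ ∈ range k, t ^ ℓ / (Nat.factorial ℓ : ℝ)) / Real.exp t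
      = Real.exp (-t) * ∑ ℓ ∈ range k, t ^ ℓ / (Nat.factorial ℓ : ℝ) := by
    rw [Real.exp_neg, div_eq_mul_inv, mul_comm]
  rw [he] at h
  apply h.congr'
  filter_upwards [eventually_ge_atTop 1] with n hn
  rw [hG n hn (t / n) (by positivity)]
  rfl

/-- If `T_k` is the `k`-th jumping time of a monotone Mallows process, so that
`G n t := P(T_k > t) = π_{n,t}(Inv ≤ k−1) = (∑_{ℓ<k} S_n^ℓ t^ℓ)/∏_{m=1}^n ∑_{ℓ<m} t^ℓ`,
then `P(n T_k > t) = G n (t/n) → e^{−t} ∑_{ℓ=0}^{k-1} t^ℓ/ℓ!`, i.e. `n T_k` converges in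
distribution to a `Gamma(k,1)` random variable. -/
theorem jump_time_tendsto_gamma (k : ℕ) (hk : 1 ≤ k)
    (G : ℕ → ℝ → ℝ)
    (hG : ∀ n : ℕ, 1 ≤ n → ∀ t : ℝ, 0 ≤ t →
      G n t = (∑ ℓ ∈ Finset.range k, (numPermsWithInv n ℓ : ℝ) * t ^ ℓ) /
        ∏ m ∈ Finset.Icc 1 n, ∑ ℓ ∈ Finset.range m, t ^ ℓ)
    (t : ℝ) (ht : 0 ≤ t) :
    Tendsto (fun n : ℕ => G n (t / n)) atTop
      (nhds (Real.exp (-t) * ∑ ℓ ∈ Finset.range k, t ^ ℓ / (Nat.factorial ℓ : ℝ))) := by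
  exact final_assembly k G hG t ht
end

section
/- For every pair of tuples I, I' ∈ E_n differing only in coordinate ℓ with I'_ℓ = I_ℓ + 1, the permutations σ = Φ(I) and σ' = Φ(I') satisfy σ' = σ ∘ τ for some transposition τ; i.e., the generator of the expanded hypercube graph H_n is contained in the set of transpositions. -/
open Finset

/-- Splitting identity: inversions at `j` plus "later larger" count plus value equals `n-1`. -/
lemma invj_split (n : ℕ) (σ : Equiv.Perm (Fin n)) (j : Fin n) :
    Invj n j σ + (univ.filter (fun i : Fin n => j < i ∧ σ j < σ i)).card + (σ j).val
      = n - 1 := by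
  have htot : (univ.filter (fun i : Fin n => σ j < σ i)).card = n - 1 - (σ j).val := by
    have himg : univ.filter (fun i : Fin n => σ j < σ i)
        = (univ.filter (fun v : Fin n => σ j < v)).map σ.symm.toEmbedding := by
      ext i
      simp only [mem_filter, mem_univ, true_and, mem_map, Equiv.coe_toEmbedding]
      constructor
      · intro h; exact ⟨σ i, h, σ.symm_apply_apply i⟩
      · rintro ⟨v, hv, rfl⟩; simpa using hv
    have hIoi : univ.filter (fun v : Fin n => σ j < v) = Finset.Ioi (σ j) := by
      ext v; simp
    rw [himg, Finset.card_map, hIoi, Fin.card_Ioi]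
  have hsplit : univ.filter (fun i : Fin n => σ j < σ i)
      = (univ.filter (fun i : Fin n => i < j ∧ σ j < σ i))
        ∪ (univ.filter (fun i : Fin n => j < i ∧ σ j < σ i)) := by
    ext i
    simp only [mem_filter, mem_univ, true_and, mem_union]
    constructor
    · intro h
      have hij : i ≠ j := by rintro rfl; exact lt_irrefl _ h
      rcases lt_or_gt_of_ne hij with h' | h'
      · exact Or.inl ⟨h', h⟩
      · exact Or.inr ⟨h', h⟩
    · rintro (⟨_, h⟩ | ⟨_, h⟩) <;> exact h
  have hdisj : Disjoint (univ.filter (fun i : Fin n => i < j ∧ σ j < σ i))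
      (univ.filter (fun i : Fin n => j < i ∧ σ j < σ i)) := by
    rw [Finset.disjoint_left]
    intro a ha hb
    simp only [mem_filter] at ha hb
    exact absurd (ha.2.1.trans hb.2.1) (lt_irrefl a)
  have := htot
  rw [hsplit, Finset.card_union_of_disjoint hdisj] at this
  have hval : (σ j).val < n := (σ j).isLt
  unfold Invj
  omega

/-- Helper for injectivity: an impossible strict comparison. -/
lemma invj_step_aux (n : ℕ) (σ : Equiv.Perm (Fin n)) (j : Fin n) (x y : Fin n)
    (hxy : x < y) (hy : ∀ i : Fin n, j < i → σ i ≠ y)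
    (heq : x.val + (univ.filter (fun i : Fin n => j < i ∧ x < σ i)).card
      = y.val + (univ.filter (fun i : Fin n => j < i ∧ y < σ i)).card) : False := by
  set d := (univ.filter (fun i : Fin n => j < i ∧ x < σ i ∧ σ i ≤ y)).card with hd
  have hsplit : univ.filter (fun i : Fin n => j < i ∧ x < σ i)
      = (univ.filter (fun i : Fin n => j < i ∧ y < σ i))
        ∪ (univ.filter (fun i : Fin n => j < i ∧ x < σ i ∧ σ i ≤ y)) := by
    ext i
    simp only [mem_filter, mem_univ, true_and, mem_union]
    constructor
    · rintro ⟨h1, h2⟩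
      rcases le_or_gt (σ i) y with h3 | h3
      · exact Or.inr ⟨h1, h2, h3⟩
      · exact Or.inl ⟨h1, h3⟩
    · rintro (⟨h1, h2⟩ | ⟨h1, h2, _⟩)
      · exact ⟨h1, hxy.trans h2⟩
      · exact ⟨h1, h2⟩
  have hdisj : Disjoint (univ.filter (fun i : Fin n => j < i ∧ y < σ i))
      (univ.filter (fun i : Fin n => j < i ∧ x < σ i ∧ σ i ≤ y)) := by
    rw [Finset.disjoint_left]
    intro a ha hb
    simp only [mem_filter] at ha hb
    exact absurd (ha.2.2.trans_le hb.2.2.2) (lt_irrefl y)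
  have hcards : (univ.filter (fun i : Fin n => j < i ∧ x < σ i)).card
      = (univ.filter (fun i : Fin n => j < i ∧ y < σ i)).card + d := by
    rw [hsplit, Finset.card_union_of_disjoint hdisj]
  have hdle : d ≤ (Finset.Ioo x y).card := by
    apply Finset.card_le_card_of_injOn σ
    · intro i hi
      simp only [mem_coe, mem_filter, mem_univ, true_and] at hi
      have hne : σ i ≠ y := hy i hi.1
      rw [Finset.mem_coe, Finset.mem_Ioo]
      exact ⟨hi.2.1, lt_of_le_of_ne hi.2.2 hne⟩
    · exact fun a _ b _ hab => σ.injective hab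
  rw [Fin.card_Ioo] at hdle
  have hxv : x.val < y.val := hxy
  omega

/-- If `σ` and `σ'` agree above `j` and have the same `j`-th inversion number,
they agree at `j`. -/
lemma invj_step (n : ℕ) (σ σ' : Equiv.Perm (Fin n)) (j : Fin n)
    (hab : ∀ i : Fin n, j < i → σ i = σ' i)
    (hinv : Invj n j σ = Invj n j σ') : σ j = σ' j := by
  have h1 := invj_split n σ j
  have h2 := invj_split n σ' j
  have hfilter : univ.filter (fun i : Fin n => j < i ∧ σ' j < σ' i)
      = univ.filter (fun i : Fin n => j < i ∧ σ' j < σ i) := by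
    apply Finset.filter_congr
    intro i _
    constructor
    · rintro ⟨h, h'⟩; exact ⟨h, by rwa [hab i h]⟩
    · rintro ⟨h, h'⟩; exact ⟨h, by rwa [← hab i h]⟩
  rw [hfilter] at h2
  have heq : (σ j).val + (univ.filter (fun i : Fin n => j < i ∧ σ j < σ i)).card
      = (σ' j).val + (univ.filter (fun i : Fin n => j < i ∧ σ' j < σ i)).card := by omega
  rcases lt_trichotomy (σ j) (σ' j) with h | h | h
  · exact absurd heq (fun heq => invj_step_aux n σ j (σ j) (σ' j) h
      (fun i hi hc => absurd (σ'.injective ((hab i hi).symm.trans hc)) (ne_of_gt hi)) heq)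
  · exact h
  · exact absurd heq.symm (fun heq => invj_step_aux n σ j (σ' j) (σ j) h
      (fun i hi hc => absurd (σ.injective hc) (ne_of_gt hi)) heq)

/-- A permutation is determined by its inversion table. -/
lemma invj_injective (n : ℕ) (σ σ' : Equiv.Perm (Fin n))
    (h : ∀ j : Fin n, Invj n j σ = Invj n j σ') : σ = σ' := by
  have key : ∀ k : ℕ, ∀ j : Fin n, n - j.val ≤ k → σ j = σ' j := by
    intro k
    induction k with
    | zero => intro j hj; exact absurd hj (by have := j.isLt; omega)
    | succ k ih =>
      intro j hj
      apply invj_step n σ σ' j _ (h j)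
      intro i hi
      apply ih
      have h1 := i.isLt
      have h2 : j.val < i.val := hi
      omega
  exact Equiv.ext (fun j => key n j (by omega))

/-- If `σ'` and `σ` have inversion tables differing only in coordinate `ℓ`, where that of
`σ'` is one larger, then `σ' = σ ∘ τ` for some transposition `τ`: the generator of the
expanded hypercube `H_n` is contained in the set of transpositions. -/
theorem hypercube_generator_subset_transpositions (n : ℕ) (σ σ' : Equiv.Perm (Fin n))
    (ℓ : Fin n)
    (h1 : ∀ j : Fin n, j ≠ ℓ → Invj n j σ' = Invj n j σ)
    (h2 : Invj n ℓ σ' = Invj n ℓ σ + 1) :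
    ∃ a b : Fin n, a ≠ b ∧ σ' = σ * Equiv.swap a b := by
  -- the inversion count at ℓ is strictly below ℓ
  have hIio : (univ.filter (fun i : Fin n => i < ℓ)).card = ℓ.val := by
    have : univ.filter (fun i : Fin n => i < ℓ) = Finset.Iio ℓ := by ext i; simp
    rw [this, Fin.card_Iio]
  have hlt : Invj n ℓ σ + 1 ≤ ℓ.val := by
    have hsub : univ.filter (fun i : Fin n => i < ℓ ∧ σ' ℓ < σ' i)
        ⊆ univ.filter (fun i : Fin n => i < ℓ) := by
      intro i hi
      simp only [mem_filter, mem_univ, true_and] at hi ⊢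
      exact hi.1
    have := Finset.card_le_card hsub
    rw [hIio] at this
    unfold Invj at h2 ⊢
    omega
  -- the set of positions before ℓ carrying a smaller value is nonempty
  set T : Finset (Fin n) := univ.filter (fun i : Fin n => i < ℓ ∧ σ i < σ ℓ) with hT
  have hTne : T.Nonempty := by
    rw [Finset.nonempty_iff_ne_empty]
    intro hTe
    have hall : ∀ i : Fin n, i < ℓ → σ ℓ < σ i := by
      intro i hi
      have : i ∉ T := by rw [hTe]; exact Finset.notMem_empty i
      simp only [hT, mem_filter, mem_univ, true_and, not_and, not_lt] at this
      have hle := this hi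
      have hne : σ i ≠ σ ℓ := fun hc => absurd (σ.injective hc) (ne_of_lt hi)
      exact lt_of_le_of_ne hle (Ne.symm hne)
    have hsub : univ.filter (fun i : Fin n => i < ℓ)
        ⊆ univ.filter (fun i : Fin n => i < ℓ ∧ σ ℓ < σ i) := by
      intro i hi
      simp only [mem_filter, mem_univ, true_and] at hi ⊢
      exact ⟨hi, hall i hi⟩
    have := Finset.card_le_card hsub
    rw [hIio] at this
    unfold Invj at hlt
    omega
  obtain ⟨p, hpT, hpmax⟩ := Finset.exists_max_image T (fun i => σ i) hTne
  simp only [hT, mem_filter, mem_univ, true_and] at hpT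
  obtain ⟨hpℓ, hpval⟩ := hpT
  -- key property of the maximal element
  have hkey : ∀ i : Fin n, i < ℓ → i ≠ p → (σ p < σ i ↔ σ ℓ < σ i) := by
    intro i hiℓ hip
    constructor
    · intro h
      rcases lt_trichotomy (σ i) (σ ℓ) with h' | h' | h'
      · have : σ i ≤ σ p := hpmax i (by simp [hT, hiℓ, h'])
        exact absurd h (not_lt.mpr this)
      · exact absurd (σ.injective h') (ne_of_lt hiℓ)
      · exact h'
    · intro h; exact hpval.trans h
  set τ : Equiv.Perm (Fin n) := Equiv.swap p ℓ with hτ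
  have hpne : p ≠ ℓ := ne_of_lt hpℓ
  have hτp : τ p = ℓ := Equiv.swap_apply_left p ℓ
  have hτℓ : τ ℓ = p := Equiv.swap_apply_right p ℓ
  have hτo : ∀ i : Fin n, i ≠ p → i ≠ ℓ → τ i = i := fun i h h' =>
    Equiv.swap_apply_of_ne_of_ne h h'
  set σ'' : Equiv.Perm (Fin n) := σ * τ with hσ''
  have hev : ∀ i : Fin n, σ'' i = σ (τ i) := fun i => rfl
  -- the inversion tables of σ' and σ'' agree
  have hmatch : ∀ j : Fin n, Invj n j σ' = Invj n j σ'' := by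
    intro j
    rcases eq_or_ne j ℓ with rfl | hjℓ
    · -- column ℓ
      have hset : univ.filter (fun i : Fin n => i < j ∧ σ'' j < σ'' i)
          = insert p (univ.filter (fun i : Fin n => i < j ∧ σ j < σ i)) := by
        ext i
        simp only [mem_filter, mem_univ, true_and, mem_insert]
        constructor
        · rintro ⟨hi1, hi2⟩
          rcases eq_or_ne i p with rfl | hip
          · exact Or.inl rfl
          · right
            have hiℓ : i ≠ j := ne_of_lt hi1
            rw [hev, hev, hτℓ, hτo i hip hiℓ] at hi2
            exact ⟨hi1, (hkey i hi1 hip).mp hi2⟩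
        · rintro (rfl | ⟨hi1, hi2⟩)
          · refine ⟨hpℓ, ?_⟩
            rw [hev, hev, hτℓ, hτp]
            exact hpval
          · have hip : i ≠ p := by
              rintro rfl
              exact absurd (hpval.trans hi2) (lt_irrefl _)
            have hiℓ : i ≠ j := ne_of_lt hi1
            refine ⟨hi1, ?_⟩
            rw [hev, hev, hτℓ, hτo i hip hiℓ]
            exact (hkey i hi1 hip).mpr hi2
      have hpnotin : p ∉ univ.filter (fun i : Fin n => i < j ∧ σ j < σ i) := by
        simp only [mem_filter, mem_univ, true_and, not_and, not_lt]
        intro _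
        exact le_of_lt hpval
      unfold Invj
      rw [hset, Finset.card_insert_of_notMem hpnotin]
      unfold Invj at h2
      omega
    · rw [h1 j hjℓ]
      rcases lt_or_gt_of_ne hjℓ with hjlt | hjgt
      · -- column j < ℓ
        have hcomp : ∀ a b : Fin n, a < ℓ → b < ℓ → a ≠ b → (σ'' a < σ'' b ↔ σ a < σ b) := by
          intro a b haℓ hbℓ hab
          have haux : ∀ c : Fin n, c < ℓ → c ≠ p → (σ c < σ ℓ ↔ σ c < σ p) := by
            intro c hcℓ hcp
            constructor
            · intro h
              rcases lt_trichotomy (σ c) (σ p) with h' | h' | h'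
              · exact h'
              · exact absurd (σ.injective h') hcp
              · exact absurd ((hkey c hcℓ hcp).mp h') (not_lt.mpr (le_of_lt h))
            · intro h
              rcases lt_trichotomy (σ c) (σ ℓ) with h' | h' | h'
              · exact h'
              · exact absurd (σ.injective h') (ne_of_lt hcℓ)
              · exact absurd ((hkey c hcℓ hcp).mpr h') (not_lt.mpr (le_of_lt h))
          rcases eq_or_ne a p with hap | hap <;> rcases eq_or_ne b p with hbp | hbp
          · exact absurd (hap.trans hbp.symm) hab
          · rw [hap, hev, hev, hτp, hτo b hbp (ne_of_lt hbℓ)]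
            exact (hkey b hbℓ hbp).symm
          · rw [hbp, hev, hev, hτp, hτo a hap (ne_of_lt haℓ)]
            exact haux a haℓ hap
          · rw [hev, hev, hτo a hap (ne_of_lt haℓ), hτo b hbp (ne_of_lt hbℓ)]
        unfold Invj
        congr 1
        apply Finset.filter_congr
        intro i _
        exact and_congr_right fun hi1 =>
          (hcomp j i hjlt (hi1.trans hjlt) (ne_of_gt hi1)).symm
      · -- column j > ℓ
        have hτj : τ j = j :=
          hτo j (ne_of_gt (hpℓ.trans hjgt)) (Ne.symm (ne_of_lt hjgt))
        have himg : univ.filter (fun i : Fin n => i < j ∧ σ'' j < σ'' i)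
            = (univ.filter (fun i : Fin n => i < j ∧ σ j < σ i)).image τ := by
          ext a
          simp only [mem_filter, mem_univ, true_and, Finset.mem_image]
          constructor
          · rintro ⟨ha1, ha2⟩
            refine ⟨τ a, ⟨?_, ?_⟩, ?_⟩
            · rcases eq_or_ne a p with hap | hap
              · rw [hap, hτp]; exact hjgt
              · rcases eq_or_ne a ℓ with haℓ | haℓ
                · rw [haℓ, hτℓ]; exact hpℓ.trans hjgt
                · rw [hτo a hap haℓ]; exact ha1
            · rw [hev, hev, hτj] at ha2; exact ha2
            · exact Equiv.swap_apply_self p ℓ a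
          · rintro ⟨b, ⟨hb1, hb2⟩, rfl⟩
            constructor
            · rcases eq_or_ne b p with hbp | hbp
              · rw [hbp, hτp]; exact hjgt
              · rcases eq_or_ne b ℓ with hbℓ | hbℓ
                · rw [hbℓ, hτℓ]; exact hpℓ.trans hjgt
                · rw [hτo b hbp hbℓ]; exact hb1
            · rw [hev, hev, hτj, Equiv.swap_apply_self]
              exact hb2
        unfold Invj
        rw [himg, Finset.card_image_of_injective _ τ.injective]
  refine ⟨p, ℓ, hpne, ?_⟩
  exact invj_injective n σ' σ'' hmatch
end

section
/- Fix 1 ≤ i < j ≤ n. Let I ∈ E_n have I_j = j−i−1 and I_k = 0 for k ≠ j, and let I' have I'_j = j−i and I'_k = 0 for k ≠ j. Then Φ(I) is the permutation (1,...,i−1, i, i+2, ..., j, i+1, j+1, ..., n) (the value i+1 placed at position j, values i+2..j shifted left), Φ(I') is the same with values i and i+1 at positions i and j swapped, and Φ(I') = Φ(I) ∘ (i j). Consequently every transposition lies in the generator of the expanded hypercube H_n. -/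
/-- Natural-number version of the cycle construction. -/
def Fnat (a b k : ℕ) : ℕ := if k ≤ a ∨ b < k then k else if k = b then a + 1 else k + 1

lemma Fnat_lt {a b k n : ℕ} (hab : a < b) (hb : b < n) (hk : k < n) : Fnat a b k < n := by
  unfold Fnat; split_ifs <;> omega

lemma Fnat_inj {a b : ℕ} (hab : a < b) {x y : ℕ} (h : Fnat a b x = Fnat a b y) : x = y := by
  unfold Fnat at h; split_ifs at h <;> omega

/-- The cycle `(a+1 a+2 ... b)` as a permutation of `Fin n`. -/
noncomputable def gPerm (n : ℕ) (a b : Fin n) (hab : a < b) : Equiv.Perm (Fin n) :=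
  Equiv.ofBijective (fun k => ⟨Fnat a b k, Fnat_lt hab b.isLt k.isLt⟩)
    (Finite.injective_iff_bijective.mp (fun x y h =>
      Fin.ext (Fnat_inj hab (by simpa [Fin.ext_iff] using h))))

lemma gPerm_val (n : ℕ) (a b : Fin n) (hab : a < b) (k : Fin n) :
    ((gPerm n a b hab) k : ℕ) =
      if k ≤ a ∨ b < k then (k : ℕ) else if k = b then (a : ℕ) + 1 else (k : ℕ) + 1 := by
  show Fnat a b k = _
  unfold Fnat
  simp only [Fin.le_def, Fin.lt_def, Fin.ext_iff]

/-- Main computation: inversion tables of `σ` and `σ'`, and `σ' = σ * swap i j`. -/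
lemma main_lemma (n : ℕ) (i j : Fin n) (hij : i < j)
    (σ σ' : Equiv.Perm (Fin n))
    (hσ : ∀ k : Fin n, (σ k : ℕ) =
      if k ≤ i ∨ j < k then (k : ℕ) else if k = j then (i : ℕ) + 1 else (k : ℕ) + 1)
    (hσ' : ∀ k : Fin n, (σ' k : ℕ) =
      if k < i ∨ j < k then (k : ℕ) else if k = j then (i : ℕ) else (k : ℕ) + 1) :
    (∀ k : Fin n, Invj n k σ = if k = j then (j : ℕ) - (i : ℕ) - 1 else 0) ∧
    (∀ k : Fin n, Invj n k σ' = if k = j then (j : ℕ) - (i : ℕ) else 0) ∧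
    σ' = σ * Equiv.swap i j := by
  have hij' : (i : ℕ) < (j : ℕ) := hij
  have hval : ∀ m : Fin n, (σ m : ℕ) =
      if (m : ℕ) ≤ (i : ℕ) ∨ (j : ℕ) < (m : ℕ) then (m : ℕ)
      else if (m : ℕ) = (j : ℕ) then (i : ℕ) + 1 else (m : ℕ) + 1 := by
    intro m; rw [hσ m]; simp only [Fin.le_def, Fin.lt_def, Fin.ext_iff]
  have hval' : ∀ m : Fin n, (σ' m : ℕ) =
      if (m : ℕ) < (i : ℕ) ∨ (j : ℕ) < (m : ℕ) then (m : ℕ)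
      else if (m : ℕ) = (j : ℕ) then (i : ℕ) else (m : ℕ) + 1 := by
    intro m; rw [hσ' m]; simp only [Fin.le_def, Fin.lt_def, Fin.ext_iff]
  refine ⟨?_, ?_, ?_⟩
  · intro k
    by_cases hkj : k = j
    · subst hkj
      rw [if_pos rfl]
      unfold Invj
      have heq : Finset.univ.filter (fun m : Fin n => m < k ∧ σ k < σ m) = Finset.Ioo i k := by
        ext m
        simp only [Finset.mem_filter, Finset.mem_univ, true_and, Finset.mem_Ioo,
          Fin.lt_def]
        have h1 := hval m
        have h2 := hval k
        split_ifs at h1 h2 <;> omega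
      rw [heq, Fin.card_Ioo]
    · rw [if_neg hkj]
      unfold Invj
      rw [Finset.card_eq_zero, Finset.filter_eq_empty_iff]
      intro m _
      rintro ⟨hmk, hσk⟩
      rw [Fin.lt_def] at hmk hσk
      have hkj' : (k : ℕ) ≠ (j : ℕ) := fun h => hkj (Fin.ext h)
      have h1 := hval m
      have h2 := hval k
      split_ifs at h1 h2 <;> omega
  · intro k
    by_cases hkj : k = j
    · subst hkj
      rw [if_pos rfl]
      unfold Invj
      have heq : Finset.univ.filter (fun m : Fin n => m < k ∧ σ' k < σ' m) = Finset.Ico i k := by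
        ext m
        simp only [Finset.mem_filter, Finset.mem_univ, true_and, Finset.mem_Ico,
          Fin.lt_def, Fin.le_def]
        have h1 := hval' m
        have h2 := hval' k
        split_ifs at h1 h2 <;> omega
      rw [heq, Fin.card_Ico]
    · rw [if_neg hkj]
      unfold Invj
      rw [Finset.card_eq_zero, Finset.filter_eq_empty_iff]
      intro m _
      rintro ⟨hmk, hσk⟩
      rw [Fin.lt_def] at hmk hσk
      have hkj' : (k : ℕ) ≠ (j : ℕ) := fun h => hkj (Fin.ext h)
      have h1 := hval' m
      have h2 := hval' k
      split_ifs at h1 h2 <;> omega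
  · ext k
    rw [Equiv.Perm.mul_apply]
    by_cases hki : k = i
    · subst hki
      rw [Equiv.swap_apply_left]
      have h1 := hval' k
      have h2 := hval j
      split_ifs at h1 h2 <;> omega
    by_cases hkj : k = j
    · subst hkj
      rw [Equiv.swap_apply_right]
      have h1 := hval' k
      have h2 := hval i
      have hkj' : (i : ℕ) ≠ (k : ℕ) := by omega
      split_ifs at h1 h2 <;> omega
    · rw [Equiv.swap_apply_of_ne_of_ne hki hkj]
      have h1 := hval' k
      have h2 := hval k
      have hki' : (k : ℕ) ≠ (i : ℕ) := fun h => hki (Fin.ext h)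
      have hkj' : (k : ℕ) ≠ (j : ℕ) := fun h => hkj (Fin.ext h)
      split_ifs at h1 h2 <;> omega

/-- Existence of the pair `(ρ, ρ')` for any `a < b`. -/
lemma exists_pair (n : ℕ) (a b : Fin n) (hab : a < b) :
    ∃ ρ ρ' : Equiv.Perm (Fin n),
      (∑ m : Fin n, |(Invj n m ρ' : ℤ) - (Invj n m ρ : ℤ)| = 1) ∧
      ρ' = ρ * Equiv.swap a b := by
  have hab' : (a : ℕ) < (b : ℕ) := hab
  set ρ := gPerm n a b hab with hρdef
  set ρ' := ρ * Equiv.swap a b with hρ'def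
  have hρ : ∀ k : Fin n, (ρ k : ℕ) =
      if k ≤ a ∨ b < k then (k : ℕ) else if k = b then (a : ℕ) + 1 else (k : ℕ) + 1 :=
    gPerm_val n a b hab
  have hρ' : ∀ k : Fin n, (ρ' k : ℕ) =
      if k < a ∨ b < k then (k : ℕ) else if k = b then (a : ℕ) else (k : ℕ) + 1 := by
    intro k
    rw [hρ'def, Equiv.Perm.mul_apply]
    by_cases hka : k = a
    · subst hka
      rw [Equiv.swap_apply_left, hρ b]
      have hab'' : ¬ ((k : ℕ) < (k : ℕ) ∨ (b : ℕ) < (k : ℕ)) := by omega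
      simp only [Fin.le_def, Fin.lt_def, Fin.ext_iff]
      split_ifs <;> omega
    by_cases hkb : k = b
    · subst hkb
      rw [Equiv.swap_apply_right, hρ a]
      simp only [Fin.le_def, Fin.lt_def, Fin.ext_iff]
      split_ifs <;> omega
    · rw [Equiv.swap_apply_of_ne_of_ne hka hkb, hρ k]
      have hka' : (k : ℕ) ≠ (a : ℕ) := fun h => hka (Fin.ext h)
      have hkb' : (k : ℕ) ≠ (b : ℕ) := fun h => hkb (Fin.ext h)
      simp only [Fin.le_def, Fin.lt_def, Fin.ext_iff]
      split_ifs <;> omega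
  obtain ⟨h1, h2, _⟩ := main_lemma n a b hab ρ ρ' hρ hρ'
  refine ⟨ρ, ρ', ?_, hρ'def⟩
  rw [Finset.sum_eq_single b]
  · rw [h1 b, h2 b, if_pos rfl, if_pos rfl]
    have : (((b : ℕ) - (a : ℕ) : ℕ) : ℤ) - (((b : ℕ) - (a : ℕ) - 1 : ℕ) : ℤ) = 1 := by
      omega
    rw [this]; exact abs_one
  · intro m _ hm
    rw [h1 m, h2 m, if_neg hm, if_neg hm]
    simp
  · intro h; exact absurd (Finset.mem_univ b) h

/-- (0-indexed version of the paper's construction, with positions and values in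
`{0, …, n-1}`.) Fix `i < j`. Let `σ` be the permutation with `σ k = k` for `k ≤ i` or
`k > j`, `σ j = i + 1`, and `σ k = k + 1` otherwise, and let `σ'` be the same with the
values `i` and `i+1` at positions `i` and `j` swapped. Then the inversion table of `σ` is
`I` (with `I j = j − i − 1` and zeros elsewhere), that of `σ'` is `I'` (with
`I' j = j − i`), and `σ' = σ ∘ (i j)`. Consequently every transposition lies in the
generator of the expanded hypercube `H_n`. -/
theorem every_transposition_in_hypercube_generator (n : ℕ) (i j : Fin n) (hij : i < j)
    (σ σ' : Equiv.Perm (Fin n))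
    (hσ : ∀ k : Fin n, (σ k : ℕ) =
      if k ≤ i ∨ j < k then (k : ℕ) else if k = j then (i : ℕ) + 1 else (k : ℕ) + 1)
    (hσ' : ∀ k : Fin n, (σ' k : ℕ) =
      if k < i ∨ j < k then (k : ℕ) else if k = j then (i : ℕ) else (k : ℕ) + 1) :
    (∀ k : Fin n, Invj n k σ = if k = j then (j : ℕ) - (i : ℕ) - 1 else 0) ∧
    (∀ k : Fin n, Invj n k σ' = if k = j then (j : ℕ) - (i : ℕ) else 0) ∧
    σ' = σ * Equiv.swap i j ∧
    (∀ a b : Fin n, a ≠ b → ∃ ρ ρ' : Equiv.Perm (Fin n),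
      (∑ m : Fin n, |(Invj n m ρ' : ℤ) - (Invj n m ρ : ℤ)| = 1) ∧
      ρ' = ρ * Equiv.swap a b) := by
  obtain ⟨h1, h2, h3⟩ := main_lemma n i j hij σ σ' hσ hσ'
  refine ⟨h1, h2, h3, ?_⟩
  intro a b hab
  rcases lt_or_gt_of_ne hab with h | h
  · exact exists_pair n a b h
  · obtain ⟨ρ, ρ', hs, he⟩ := exists_pair n b a h
    exact ⟨ρ, ρ', hs, by rwa [Equiv.swap_comm] at he⟩
end
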